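/- arXiv:2303.07444 — 5 statements merged into one kernel-verified Lean document; each statement's English description precedes it below -/
import Mathlib

section
/- Every graph G on n vertices whose layered tree-independence number is at most k has tree-independence number at most 2·√(k·n). -/
open Classical

/-- A tree decomposition of a graph `G`. -/
structure TreeDecomp {V : Type*} (G : SimpleGraph V) where
  ι : Type
  fin : Fintype ι
  T : SimpleGraph ι
  isTree : T.IsTree
  bag : ι → Set V
  mem_bag : ∀ v : V, ∃ t, v ∈ bag t
  edge_bag : ∀ ⦃u v : V⦄, G.Adj u v → ∃ t, u ∈ bag t ∧ v ∈ bag t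
  bag_connected : ∀ v : V, (T.induce {t | v ∈ bag t}).Connected

/-- `I` is an independent set of `G` contained in `S`, i.e. an independent set of `G[S]`. -/
def IsIndepSetIn {V : Type*} (G : SimpleGraph V) (S : Set V) (I : Finset V) : Prop :=
  ↑I ⊆ S ∧ ∀ u ∈ I, ∀ v ∈ I, u ≠ v → ¬ G.Adj u v

/-- `α(G[S]) ≤ k`. -/
def IndepLE {V : Type*} (G : SimpleGraph V) (S : Set V) (k : ℕ) : Prop :=
  ∀ I : Finset V, IsIndepSetIn G S I → I.card ≤ k

/-- The independence number of the tree decomposition is at most `k`. -/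
def TreeDecomp.IndepNumLE {V : Type*} {G : SimpleGraph V} (td : TreeDecomp G) (k : ℕ) : Prop :=
  ∀ t : td.ι, IndepLE G (td.bag t) k

/-- The tree-independence number of `G` is at most `k`. -/
def treeAlphaLE {V : Type*} (G : SimpleGraph V) (k : ℕ) : Prop :=
  ∃ td : TreeDecomp G, td.IndepNumLE k

/-- The tree-independence number of `G`. -/
noncomputable def treeAlpha {V : Type*} (G : SimpleGraph V) : ℕ :=
  sInf {k | treeAlphaLE G k}

/-- A layering of `G`, encoded by the function sending a vertex to the index of its layer. -/
def IsLayering {V : Type*} (G : SimpleGraph V) (L : V → ℕ) : Prop :=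
  ∀ ⦃u v : V⦄, G.Adj u v → (L u : ℤ) ≤ (L v : ℤ) + 1

/-- The layered tree-independence number of `G` is at most `k`. -/
def layeredTreeAlphaLE {V : Type*} (G : SimpleGraph V) (k : ℕ) : Prop :=
  ∃ (td : TreeDecomp G) (L : V → ℕ), IsLayering G L ∧
    ∀ (t : td.ι) (i : ℕ), IndepLE G (td.bag t ∩ {v | L v = i}) k

/-- The layered tree-independence number of `G`. -/
noncomputable def layeredTreeAlpha {V : Type*} (G : SimpleGraph V) : ℕ :=
  sInf {k | layeredTreeAlphaLE G k}

/-- The number of elements of the multiset `𝒞` containing `v` (with multiplicity). -/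
noncomputable def coverCount {V : Type*} (𝒞 : Multiset (Set V)) (v : V) : ℕ :=
  Multiset.countP (fun C => v ∈ C) 𝒞

/-- `𝒞` is a `β`-general cover: every vertex belongs to at least `β·|𝒞|` elements. -/
def IsGeneralCover {V : Type*} (β : ℝ) (𝒞 : Multiset (Set V)) : Prop :=
  𝒞 ≠ 0 ∧ ∀ v : V, β * (Multiset.card 𝒞 : ℝ) ≤ (coverCount 𝒞 v : ℝ)

/-- The intersection graph of an (indexed) family of sets. -/
def intersectionGraph {ι : Type*} {α : Type*} (D : ι → Set α) : SimpleGraph ι where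
  Adj i j := i ≠ j ∧ (D i ∩ D j).Nonempty
  symm := by
    constructor
    rintro i j ⟨hne, x, hx1, hx2⟩
    exact ⟨hne.symm, x, hx2, hx1⟩
  loopless := by
    constructor
    rintro i ⟨hne, -⟩
    exact hne rfl

/-- The `p`-th power of a graph. -/
def gpower {V : Type*} (G : SimpleGraph V) (p : ℕ) : SimpleGraph V where
  Adj u v := u ≠ v ∧ ∃ w : G.Walk u v, w.length ≤ p
  symm := by
    constructor
    rintro u v ⟨hne, w, hw⟩
    exact ⟨hne.symm, w.reverse, by simpa using hw⟩
  loopless := by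
    constructor
    rintro u ⟨hne, -⟩
    exact hne rfl

/-- The axis-aligned closed hypercube of side length `r` with lower corner `x`. -/
def cube (d : ℕ) (x : EuclideanSpace ℝ (Fin d)) (r : ℝ) : Set (EuclideanSpace ℝ (Fin d)) :=
  {y | ∀ i, x i ≤ y i ∧ y i ≤ x i + r}

/-- The size of an object: the side length of its smallest enclosing axis-aligned hypercube. -/
noncomputable def objSize (d : ℕ) (O : Set (EuclideanSpace ℝ (Fin d))) : ℝ :=
  sInf {r : ℝ | 0 ≤ r ∧ ∃ x, O ⊆ cube d x r}

/-- The collection `O` is `c`-fat. -/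
def IsFat {ι : Type*} (d : ℕ) (c : ℝ) (O : ι → Set (EuclideanSpace ℝ (Fin d))) : Prop :=
  ∀ r : ℝ, 0 < r → ∀ x : EuclideanSpace ℝ (Fin d), ∀ P : Finset ι,
    (∀ i ∈ P, ∀ j ∈ P, i ≠ j → Disjoint (O i) (O j)) →
    (∀ i ∈ P, (O i ∩ cube d x r).Nonempty ∧ r ≤ objSize d (O i)) →
    ∃ pts : Finset (EuclideanSpace ℝ (Fin d)),
      (pts.card : ℝ) ≤ c ∧ ∀ i ∈ P, ∃ p ∈ pts, p ∈ O i

/-- The `n`-dimensional grid graph of width `n`. -/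
def gridGraphN (n : ℕ) : SimpleGraph (Fin n → Fin n) where
  Adj a b := ∑ i, ((a i : ℤ) - (b i : ℤ)).natAbs = 1
  symm := by
    constructor
    intro a b h
    rw [← h]
    exact Finset.sum_congr rfl fun i _ => by omega
  loopless := by
    constructor
    intro a h
    simp at h

/-- The grid graph on `ℤ²`. -/
def latticeGraph : SimpleGraph (ℤ × ℤ) where
  Adj p q := (p.1 - q.1).natAbs + (p.2 - q.2).natAbs = 1
  symm := by
    constructor
    intro p q h
    omega
  loopless := by
    constructor
    intro p h
    simp at h

/-- `P` is (the vertex set of) a path on the integer grid: a finite nonempty subset of `ℤ²`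
whose induced subgraph in the grid graph is a path. -/
def IsGridPath (P : Set (ℤ × ℤ)) : Prop :=
  P.Finite ∧ P.Nonempty ∧ (latticeGraph.induce P).IsTree ∧
    ∀ v : P, ((latticeGraph.induce P).neighborSet v).ncard ≤ 2


private lemma auxN0 {p i : ℕ} (hp : 0 < p) (hi : i < p) (a : ℕ) :
    p ∣ (a + (p - i)) ↔ a % p = i := by
  have hmod := Nat.div_add_mod a p
  have hr : a % p < p := Nat.mod_lt _ hp
  set r := a % p with hrdef
  have h1 : a + (p - i) = p * (a / p) + (r + (p - i)) := by omega
  rw [h1, Nat.dvd_add_right (Dvd.intro _ rfl)]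
  constructor
  · rintro ⟨c, hc⟩
    have hc0 : c ≠ 0 := by rintro rfl; omega
    have hc2 : c < 2 := by
      by_contra hcge
      have : p * 2 ≤ p * c := Nat.mul_le_mul_left p (by omega)
      omega
    have : c = 1 := by omega
    subst this
    omega
  · intro h
    exact ⟨1, by omega⟩

private lemma auxN1 {p i : ℕ} (hp : 0 < p) (hi : i < p) (a : ℕ) (ha : a % p ≠ i) :
    (a + 1 + (p - 1 - i)) / p = (a + (p - 1 - i)) / p := by
  have h1 : a + 1 + (p - 1 - i) = (a + (p - 1 - i)) + 1 := by omega
  rw [h1]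
  apply Nat.succ_div_of_not_dvd
  have h2 : a + (p - 1 - i) + 1 = a + (p - i) := by omega
  rw [h2, auxN0 hp hi]
  exact ha

private lemma auxN2 {p i : ℕ} (hp : 0 < p) (hi : i < p) (a j : ℕ)
    (hj : (a + (p - 1 - i)) / p = j) :
    j * p ≤ a + (p - 1 - i) ∧ a + (p - 1 - i) < (j + 1) * p := by
  constructor
  · rw [← hj]; exact Nat.div_mul_le_self _ _
  · rw [← Nat.div_lt_iff_lt_mul hp, hj]; omega

open SimpleGraph in
private lemma cycle_two_neighbors {α : Type} {G : SimpleGraph α} {a : α} {c : G.Walk a a}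
    (hc : c.IsCycle) :
    ∃ u v, u ≠ v ∧ G.Adj a u ∧ G.Adj a v ∧ u ∈ c.support ∧ v ∈ c.support := by
  cases c with
  | nil => exact absurd rfl hc.ne_nil
  | @cons _ b _ h q =>
    rw [SimpleGraph.Walk.cons_isCycle_iff] at hc
    obtain ⟨hqp, hqe⟩ := hc
    cases q with
    | nil => exact absurd h.ne' (by simp)
    | @cons _ b2 _ h2 q2 =>
      obtain ⟨x, r, h', hxr⟩ := SimpleGraph.Walk.exists_cons_eq_concat h2 q2
      have hedge : s(x, a) ∈ (SimpleGraph.Walk.cons h2 q2).edges := by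
        rw [hxr, SimpleGraph.Walk.edges_concat]
        simp
      refine ⟨b, x, ?_, h, h'.symm, ?_, ?_⟩
      · rintro rfl
        exact hqe (by rw [Sym2.eq_swap]; exact hedge)
      · simp [SimpleGraph.Walk.support_cons]
      · have := SimpleGraph.Walk.fst_mem_support_of_mem_edges _ hedge
        rw [SimpleGraph.Walk.support_cons]
        exact List.mem_cons_of_mem _ this

open SimpleGraph in
private lemma isTree_of_height {α : Type} [Nonempty α] (G : SimpleGraph α)
    (r : α) (h : α → ℕ)
    (hA : ∀ a u v, G.Adj a u → G.Adj a v → h u < h a → h v < h a → u = v)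
    (hB : ∀ a, a ≠ r → ∃ u, G.Adj a u ∧ h u < h a)
    (hC : ∀ a b, G.Adj a b → h a ≠ h b) : G.IsTree := by
  have key : ∀ n a, h a ≤ n → G.Reachable a r := by
    intro n
    induction n with
    | zero =>
      intro a ha
      by_cases har : a = r
      · subst har; exact SimpleGraph.Reachable.refl _
      · obtain ⟨u, -, hlt⟩ := hB a har; omega
    | succ n ih =>
      intro a ha
      by_cases har : a = r
      · subst har; exact SimpleGraph.Reachable.refl _
      · obtain ⟨u, hu, hlt⟩ := hB a har
        exact (hu.reachable).trans (ih u (by omega))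
  constructor
  · exact ⟨fun a b => (key _ a le_rfl).trans (key _ b le_rfl).symm⟩
  · intro v c hc
    have hvmem : v ∈ c.support := Walk.start_mem_support c
    obtain ⟨a, haF, hamax⟩ := Finset.exists_max_image c.support.toFinset h
      ⟨v, List.mem_toFinset.mpr hvmem⟩
    rw [List.mem_toFinset] at haF
    have hc' := hc.rotate haF
    obtain ⟨u, w, huw, hau, haw, hus, hws⟩ := cycle_two_neighbors hc'
    have hmem : ∀ x, G.Adj a x → x ∈ (c.rotate a haF).support → h x < h a := by
      intro x hax hxs
      have hxc : x ∈ c.support := by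
        rw [SimpleGraph.Walk.support_eq_cons] at hxs
        rcases List.mem_cons.mp hxs with rfl | hxs
        · exact absurd rfl hax.ne'
        · have := (SimpleGraph.Walk.support_rotate c a haF).mem_iff.mp hxs
          exact List.mem_of_mem_tail this
      have hle := hamax x (List.mem_toFinset.mpr hxc)
      exact lt_of_le_of_ne hle (fun hxa => hC a x hax (hxa.symm))
    exact huw (hA a u w hau haw (hmem u hau hus) (hmem w haw hws))

open SimpleGraph in
private lemma tree_shortest_path {ι : Type} {T : SimpleGraph ι} (hT : T.IsTree) (t₀ : ι)
    (u : ι) {t : ι} (hlt : T.dist u t₀ < T.dist t t₀) :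
    ∃ P : T.Walk u t₀, P.IsPath ∧ P.length ≤ T.dist u t₀ ∧ t ∉ P.support := by
  obtain ⟨w, hw⟩ := hT.isConnected.exists_walk_length_eq_dist u t₀
  refine ⟨w.bypass, w.bypass_isPath, by rw [← hw]; exact w.length_bypass_le, ?_⟩
  intro ht
  have h1 : T.dist t t₀ ≤ (w.bypass.dropUntil t ht).length := dist_le _
  have h2 := w.bypass.length_dropUntil_le ht
  have h3 := w.length_bypass_le
  omega

open SimpleGraph in
private lemma tree_parent_unique {ι : Type} {T : SimpleGraph ι} (hT : T.IsTree) (t₀ : ι)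
    {t u v : ι} (htu : T.Adj t u) (htv : T.Adj t v)
    (hu : T.dist u t₀ < T.dist t t₀) (hv : T.dist v t₀ < T.dist t t₀) : u = v := by
  obtain ⟨Pu, hPu, -, htPu⟩ := tree_shortest_path hT t₀ u hu
  obtain ⟨Pv, hPv, -, htPv⟩ := tree_shortest_path hT t₀ v hv
  have hQu : (Walk.cons htu Pu).IsPath := hPu.cons htPu
  have hQv : (Walk.cons htv Pv).IsPath := hPv.cons htPv
  have := hT.IsAcyclic.path_unique ⟨Walk.cons htu Pu, hQu⟩ ⟨Walk.cons htv Pv, hQv⟩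
  have hw : (Walk.cons htu Pu) = (Walk.cons htv Pv) := congrArg Subtype.val this
  have h1 : (Walk.cons htu Pu).getVert 1 = u := by rw [Walk.getVert_cons _ _ one_ne_zero]; simp
  have h2 : (Walk.cons htv Pv).getVert 1 = v := by rw [Walk.getVert_cons _ _ one_ne_zero]; simp
  rw [← h1, ← h2, hw]

open SimpleGraph in
private lemma tree_adj_dist_ne {ι : Type} {T : SimpleGraph ι} (hT : T.IsTree) (t₀ : ι)
    {t s : ι} (hts : T.Adj t s) : T.dist t t₀ ≠ T.dist s t₀ := by
  intro heq
  obtain ⟨ws, hws⟩ := hT.isConnected.exists_walk_length_eq_dist s t₀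
  have hPs : ws.bypass.IsPath := ws.bypass_isPath
  have hlen : ws.bypass.length ≤ T.dist s t₀ := by
    rw [← hws]; exact ws.length_bypass_le
  by_cases ht : t ∈ ws.bypass.support
  · have hts' : s ≠ t := hts.ne'
    have hspec := ws.bypass.take_spec ht
    have hlens : (ws.bypass.takeUntil t ht).length + (ws.bypass.dropUntil t ht).length
        = ws.bypass.length := by
      rw [← Walk.length_append, hspec]
    have htake : (ws.bypass.takeUntil t ht).length ≠ 0 := by
      intro h0
      exact hts' (Walk.eq_of_length_eq_zero h0)
    have hdt : T.dist t t₀ ≤ (ws.bypass.dropUntil t ht).length := dist_le _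
    omega
  · have hQ : (Walk.cons hts ws.bypass).IsPath := hPs.cons ht
    obtain ⟨wt, hwt⟩ := hT.isConnected.exists_walk_length_eq_dist t t₀
    have hPt : wt.bypass.IsPath := wt.bypass_isPath
    have hlent : wt.bypass.length ≤ T.dist t t₀ := by
      rw [← hwt]; exact wt.length_bypass_le
    have := hT.IsAcyclic.path_unique ⟨Walk.cons hts ws.bypass, hQ⟩ ⟨wt.bypass, hPt⟩
    have hw : (Walk.cons hts ws.bypass) = wt.bypass := congrArg Subtype.val this
    have hlen2 : ws.bypass.length + 1 = wt.bypass.length := by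
      rw [← hw, Walk.length_cons]
    have hds : T.dist s t₀ ≤ ws.bypass.length := dist_le _
    omega

open SimpleGraph in
private lemma tree_exists_parent {ι : Type} {T : SimpleGraph ι} (hT : T.IsTree) (t₀ : ι)
    {t : ι} (ht : t ≠ t₀) : ∃ u, T.Adj t u ∧ T.dist u t₀ < T.dist t t₀ := by
  obtain ⟨w, hw⟩ := hT.isConnected.exists_walk_length_eq_dist t t₀
  have hlen : 0 < w.length := by
    rcases Nat.eq_zero_or_pos w.length with h0 | h
    · exact absurd (Walk.eq_of_length_eq_zero h0) ht
    · exact h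
  have hnn : ¬ w.Nil := Walk.not_nil_iff_lt_length.mpr hlen
  refine ⟨w.getVert 1, ?_, ?_⟩
  · have := w.adj_getVert_succ (i := 0) hlen
    simpa using this
  · have h1 : T.dist (w.getVert 1) t₀ ≤ w.tail.length := dist_le _
    have h2 : w.tail.length + 1 = w.length := Walk.length_tail_add_one hnn
    omega

private def comb {ι : Type} (T : SimpleGraph ι) (t₀ : ι) (B : ℕ) :
    SimpleGraph (ι × Fin B) where
  Adj x y := (x.2 = y.2 ∧ T.Adj x.1 y.1) ∨
    (x.1 = y.1 ∧ x.1 = t₀ ∧ ((x.2 : ℕ) + 1 = (y.2 : ℕ) ∨ (y.2 : ℕ) + 1 = (x.2 : ℕ)))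
  symm := by
    constructor
    rintro ⟨t, j⟩ ⟨s, l⟩ (⟨h1, h2⟩ | ⟨h1, h2, h3⟩)
    · exact Or.inl ⟨h1.symm, h2.symm⟩
    · exact Or.inr ⟨h1.symm, h1.symm.trans h2, h3.symm⟩
  loopless := by
    constructor
    rintro ⟨t, j⟩ (⟨-, h⟩ | ⟨-, -, h⟩)
    · exact h.ne rfl
    · omega

open SimpleGraph in
private lemma comb_isTree {ι : Type} {T : SimpleGraph ι} (hT : T.IsTree) (t₀ : ι)
    {B : ℕ} (hB : 0 < B) : (comb T t₀ B).IsTree := by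
  haveI : Nonempty ι := hT.isConnected.nonempty
  haveI : Nonempty (ι × Fin B) := ⟨(Classical.arbitrary ι, ⟨0, hB⟩)⟩
  have hd0 : T.dist t₀ t₀ = 0 := SimpleGraph.dist_self
  apply isTree_of_height (comb T t₀ B) (t₀, ⟨0, hB⟩)
    (fun x => (x.2 : ℕ) + T.dist x.1 t₀)
  · -- uniqueness of lower neighbors
    rintro ⟨t, j⟩ ⟨u, ju⟩ ⟨v, jv⟩ hadj1 hadj2 hlt1 hlt2
    have hlt1' : (ju : ℕ) + T.dist u t₀ < (j : ℕ) + T.dist t t₀ := hlt1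
    have hlt2' : (jv : ℕ) + T.dist v t₀ < (j : ℕ) + T.dist t t₀ := hlt2
    rcases hadj1 with ⟨h1, h2⟩ | ⟨h1, h2, h3⟩ <;>
      rcases hadj2 with ⟨g1, g2⟩ | ⟨g1, g2, g3⟩
    · have h1' : j = ju := h1
      have g1' : j = jv := g1
      have h2' : T.Adj t u := h2
      have g2' : T.Adj t v := g2
      have hju : (ju : ℕ) = (j : ℕ) := by rw [h1']
      have hjv : (jv : ℕ) = (j : ℕ) := by rw [g1']
      have hu : T.dist u t₀ < T.dist t t₀ := by omega
      have hv : T.dist v t₀ < T.dist t t₀ := by omega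
      have := tree_parent_unique hT t₀ h2' g2' hu hv
      rw [Prod.ext_iff]
      exact ⟨this, h1'.symm.trans g1'⟩
    · exfalso
      have h1' : j = ju := h1
      have h2' : T.Adj t u := h2
      have g2' : t = t₀ := g2
      have hju : (ju : ℕ) = (j : ℕ) := by rw [h1']
      rw [g2', hd0] at hlt1'
      omega
    · exfalso
      have g1' : j = jv := g1
      have h2' : t = t₀ := h2
      have hjv : (jv : ℕ) = (j : ℕ) := by rw [g1']
      rw [h2', hd0] at hlt2'
      omega
    · have h1' : t = u := h1
      have g1' : t = v := g1
      have h2' : t = t₀ := h2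
      have h3' : (j : ℕ) + 1 = (ju : ℕ) ∨ (ju : ℕ) + 1 = (j : ℕ) := h3
      have g3' : (j : ℕ) + 1 = (jv : ℕ) ∨ (jv : ℕ) + 1 = (j : ℕ) := g3
      have e0 : T.dist t t₀ = 0 := by rw [h2']; exact hd0
      have e1 : T.dist u t₀ = 0 := by rw [← h1', h2']; exact hd0
      have e2 : T.dist v t₀ = 0 := by rw [← g1', h2']; exact hd0
      rw [e0, e1] at hlt1'
      rw [e0, e2] at hlt2'
      rw [Prod.ext_iff]
      exact ⟨h1'.symm.trans g1', Fin.ext (show (ju:ℕ) = (jv:ℕ) by omega)⟩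
  · -- existence of a lower neighbor
    rintro ⟨t, j⟩ hne
    by_cases ht : t = t₀
    · subst ht
      have hj : (j : ℕ) ≠ 0 := by
        intro h0
        exact hne (Prod.ext rfl (Fin.ext h0))
      have hjB : (j : ℕ) - 1 < B := by omega
      refine ⟨(t, ⟨(j : ℕ) - 1, hjB⟩), Or.inr ⟨rfl, rfl, Or.inr (by simp only; omega)⟩, ?_⟩
      show ((j : ℕ) - 1) + T.dist t t < (j : ℕ) + T.dist t t
      omega
    · obtain ⟨u, hadj, hlt⟩ := tree_exists_parent hT t₀ ht
      refine ⟨(u, j), Or.inl ⟨rfl, hadj⟩, ?_⟩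
      show (j : ℕ) + T.dist u t₀ < (j : ℕ) + T.dist t t₀
      omega
  · -- heights differ across edges
    rintro ⟨t, j⟩ ⟨s, l⟩ hadj heq
    have heq' : (j : ℕ) + T.dist t t₀ = (l : ℕ) + T.dist s t₀ := heq
    rcases hadj with ⟨h1, h2⟩ | ⟨h1, h2, h3⟩
    · have h1' : j = l := h1
      have h2' : T.Adj t s := h2
      have hjl : (j : ℕ) = (l : ℕ) := by rw [h1']
      exact tree_adj_dist_ne hT t₀ h2' (by omega)
    · have h1' : t = s := h1
      have h3' : (j : ℕ) + 1 = (l : ℕ) ∨ (l : ℕ) + 1 = (j : ℕ) := h3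
      rw [h1'] at heq'
      omega

private def bandN (p i a : ℕ) : ℕ := (a + (p - 1 - i)) / p

open SimpleGraph in
private lemma main_construct {V : Type} [Fintype V] (G : SimpleGraph V)
    (td : TreeDecomp G) (L : V → ℕ) (hL : IsLayering G L) (k p i : ℕ)
    (hp : 0 < p) (hi : i < p)
    (hk : ∀ t ℓ, IndepLE G (td.bag t ∩ {v | L v = ℓ}) k) :
    treeAlphaLE G ((p - 1) * k +
      (Finset.univ.filter (fun v => L v % p = i)).card) := by
  classical
  letI : Fintype td.ι := td.fin
  haveI : Nonempty td.ι := td.isTree.isConnected.nonempty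
  set t₀ : td.ι := Classical.arbitrary td.ι with ht₀
  set B : ℕ := (Finset.univ.sup (fun v => bandN p i (L v))) + 1 with hBdef
  have hband : ∀ v : V, bandN p i (L v) < B := fun v =>
    Nat.lt_succ_of_le (Finset.le_sup (f := fun v => bandN p i (L v)) (Finset.mem_univ v))
  have hB : 0 < B := Nat.succ_pos _
  have hband_adj : ∀ u v, G.Adj u v → L u % p ≠ i → L v % p ≠ i →
      bandN p i (L u) = bandN p i (L v) := by
    intro u v huv hu hv
    have h1 : (L u : ℤ) ≤ L v + 1 := hL huv
    have h2 : (L v : ℤ) ≤ L u + 1 := hL huv.symm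
    have htri : L u = L v ∨ L u + 1 = L v ∨ L v + 1 = L u := by omega
    rcases htri with h | h | h
    · unfold bandN; rw [h]
    · unfold bandN; rw [← h]; exact (auxN1 hp hi (L u) hu).symm
    · unfold bandN; rw [← h]; exact auxN1 hp hi (L v) hv
  set Sfin : Finset V := Finset.univ.filter (fun v => L v % p = i) with hSfin
  refine ⟨⟨td.ι × Fin B, inferInstance, comb td.T t₀ B, comb_isTree td.isTree t₀ hB,
    fun x => (td.bag x.1 ∩ {v | bandN p i (L v) = (x.2 : ℕ) ∧ ¬ L v % p = i})
      ∪ {v | L v % p = i},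
    ?_, ?_, ?_⟩, ?_⟩
  · -- mem_bag
    intro v
    by_cases hv : L v % p = i
    · exact ⟨(t₀, ⟨0, hB⟩), Or.inr hv⟩
    · obtain ⟨t, ht⟩ := td.mem_bag v
      exact ⟨(t, ⟨bandN p i (L v), hband v⟩), Or.inl ⟨ht, rfl, hv⟩⟩
  · -- edge_bag
    intro u v huv
    by_cases hu : L u % p = i <;> by_cases hv : L v % p = i
    · exact ⟨(t₀, ⟨0, hB⟩), Or.inr hu, Or.inr hv⟩
    · obtain ⟨t, ht⟩ := td.mem_bag v
      exact ⟨(t, ⟨bandN p i (L v), hband v⟩), Or.inr hu, Or.inl ⟨ht, rfl, hv⟩⟩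
    · obtain ⟨t, ht⟩ := td.mem_bag u
      exact ⟨(t, ⟨bandN p i (L u), hband u⟩), Or.inl ⟨ht, rfl, hu⟩, Or.inr hv⟩
    · obtain ⟨t, ht, ht'⟩ := td.edge_bag huv
      refine ⟨(t, ⟨bandN p i (L u), hband u⟩), Or.inl ⟨ht, rfl, hu⟩,
        Or.inl ⟨ht', (hband_adj u v huv hu hv).symm, hv⟩⟩
  · -- bag_connected
    intro v
    by_cases hv : L v % p = i
    · have hset : {x : td.ι × Fin B | v ∈
          (td.bag x.1 ∩ {w | bandN p i (L w) = (x.2 : ℕ) ∧ ¬ L w % p = i})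
          ∪ {w | L w % p = i}} = Set.univ :=
        Set.eq_univ_of_forall (fun x => Or.inr hv)
      rw [hset]
      exact (SimpleGraph.induceUnivIso _).connected_iff.mpr
        (comb_isTree td.isTree t₀ hB).isConnected
    · set jv : Fin B := ⟨bandN p i (L v), hband v⟩ with hjv
      have hset : {x : td.ι × Fin B | v ∈
          (td.bag x.1 ∩ {w | bandN p i (L w) = (x.2 : ℕ) ∧ ¬ L w % p = i})
          ∪ {w | L w % p = i}} = {x : td.ι × Fin B | x.1 ∈ {t | v ∈ td.bag t} ∧ x.2 = jv} := by
        ext ⟨t, j⟩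
        simp only [Set.mem_setOf_eq, Set.mem_union, Set.mem_inter_iff]
        constructor
        · rintro (⟨h1, h2, -⟩ | h)
          · exact ⟨h1, Fin.ext (by rw [hjv]; exact h2.symm)⟩
          · exact absurd h hv
        · rintro ⟨h1, h2⟩
          exact Or.inl ⟨h1, by rw [h2, hjv], hv⟩
      rw [hset]
      have e : td.T.induce {t | v ∈ td.bag t} ≃g
          (comb td.T t₀ B).induce {x : td.ι × Fin B | x.1 ∈ {t | v ∈ td.bag t} ∧ x.2 = jv} := by
        refine ⟨⟨fun a => ⟨(a.1, jv), a.2, rfl⟩, fun x => ⟨x.1.1, x.2.1⟩,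
          fun a => rfl, fun x => Subtype.ext (Prod.ext rfl x.2.2.symm)⟩, ?_⟩
        intro a b
        show (comb td.T t₀ B).Adj (a.1, jv) (b.1, jv) ↔ td.T.Adj a.1 b.1
        constructor
        · rintro (⟨-, h⟩ | ⟨-, -, h3⟩)
          · exact h
          · have h3' : (jv : ℕ) + 1 = (jv : ℕ) ∨ (jv : ℕ) + 1 = (jv : ℕ) := h3
            omega
        · intro h
          exact Or.inl ⟨rfl, h⟩
      exact e.connected_iff.mp (td.bag_connected v)
  · -- independence bound
    rintro ⟨t, j⟩ I ⟨hIsub, hIind⟩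
    set I₁ : Finset V := I.filter (fun v => L v % p = i) with hI₁
    set I₂ : Finset V := I.filter (fun v => ¬ L v % p = i) with hI₂
    have hcard : I₁.card + I₂.card = I.card :=
      Finset.card_filter_add_card_filter_not _
    have hc1 : I₁.card ≤ Sfin.card := by
      apply Finset.card_le_card
      intro v hvI
      rw [hI₁, Finset.mem_filter] at hvI
      rw [hSfin, Finset.mem_filter]
      exact ⟨Finset.mem_univ v, hvI.2⟩
    have hI₂mem : ∀ v ∈ I₂, v ∈ td.bag t ∧ bandN p i (L v) = (j : ℕ) ∧ ¬ L v % p = i := by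
      intro v hvI
      rw [hI₂, Finset.mem_filter] at hvI
      rcases hIsub hvI.1 with ⟨h1, h2, h3⟩ | h
      · exact ⟨h1, h2, h3⟩
      · exact absurd h hvI.2
    set F : Finset ℕ :=
      (Finset.Icc ((j : ℕ) * p + i + 1 - p) ((j : ℕ) * p + i)).erase ((j : ℕ) * p + i)
      with hF
    have hqc : (p - 1 - i) + i + 1 = p := by omega
    have hmemF : ∀ v ∈ I₂, L v ∈ F := by
      intro v hvI
      obtain ⟨-, hb, hnm⟩ := hI₂mem v hvI
      obtain ⟨hq1, hq2⟩ := auxN2 hp hi (L v) _ hb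
      rw [Nat.succ_mul] at hq2
      rw [hF, Finset.mem_erase, Finset.mem_Icc]
      have hne : L v ≠ (j : ℕ) * p + i := by
        intro heq
        apply hnm
        rw [heq, Nat.add_comm, Nat.add_mul_mod_self_right, Nat.mod_eq_of_lt hi]
      generalize hqq : (j : ℕ) * p = q at *
      omega
    have hfibcard : ∀ ℓ ∈ F, (I₂.filter (fun v => L v = ℓ)).card ≤ k := by
      intro ℓ hℓ
      apply hk t ℓ
      constructor
      · intro v hvmem
        rw [Finset.mem_coe, Finset.mem_filter] at hvmem
        exact ⟨(hI₂mem v hvmem.1).1, hvmem.2⟩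
      · intro u hu w hw hne
        rw [Finset.mem_filter] at hu hw
        rw [hI₂, Finset.mem_filter] at hu hw
        exact hIind u hu.1.1 w hw.1.1 hne
    have hfib : I₂.card = ∑ ℓ ∈ F, (I₂.filter (fun v => L v = ℓ)).card :=
      Finset.card_eq_sum_card_fiberwise hmemF
    have hsum : ∑ ℓ ∈ F, (I₂.filter (fun v => L v = ℓ)).card ≤ F.card * k := by
      have := Finset.sum_le_card_nsmul F (fun ℓ => (I₂.filter (fun v => L v = ℓ)).card) k
        (fun ℓ hℓ => hfibcard ℓ hℓ)
      simpa [smul_eq_mul] using this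
    have hFcard : F.card ≤ p - 1 := by
      have hmemtop : (j : ℕ) * p + i ∈
          Finset.Icc ((j : ℕ) * p + i + 1 - p) ((j : ℕ) * p + i) := by
        rw [Finset.mem_Icc]
        omega
      rw [hF, Finset.card_erase_of_mem hmemtop, Nat.card_Icc]
      generalize (j : ℕ) * p = q
      omega
    have hc2 : I₂.card ≤ (p - 1) * k := by
      have := Nat.mul_le_mul_right k hFcard
      omega
    omega

private lemma connected_of_subsingleton {α : Type*} [Nonempty α] [Subsingleton α]
    (H : SimpleGraph α) : H.Connected :=
  ⟨fun a b => by rw [Subsingleton.elim a b]⟩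

private lemma trivial_layered {V : Type} [Fintype V] (G : SimpleGraph V) :
    layeredTreeAlphaLE G (Fintype.card V) := by
  classical
  refine ⟨⟨Unit, inferInstance, ⊥, ⟨connected_of_subsingleton _, SimpleGraph.isAcyclic_bot⟩,
    fun _ => Set.univ, fun v => ⟨(), Set.mem_univ v⟩,
    fun u v _ => ⟨(), Set.mem_univ u, Set.mem_univ v⟩, fun v => ?_⟩, fun _ => 0,
    fun u v _ => by norm_num, fun t i I hI => ?_⟩
  · haveI : Nonempty {t : Unit | v ∈ Set.univ} := ⟨⟨(), Set.mem_univ v⟩⟩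
    exact connected_of_subsingleton _
  · exact Finset.card_le_univ I

/-- Every graph `G` on `n` vertices whose layered tree-independence number is at
most `k` has tree-independence number at most `2·√(k·n)`. -/
theorem stmt0 {V : Type} [Fintype V] (G : SimpleGraph V) (k : ℕ)
    (h : layeredTreeAlpha G ≤ k) :
    (treeAlpha G : ℝ) ≤ 2 * Real.sqrt ((k : ℝ) * (Fintype.card V : ℝ)) := by
  classical
  have hsqrt0 : 0 ≤ 2 * Real.sqrt ((k : ℝ) * (Fintype.card V : ℝ)) := by positivity
  -- the set of valid layered parameters is nonempty
  have hne : {k' | layeredTreeAlphaLE G k'}.Nonempty := ⟨_, trivial_layered G⟩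
  have hmem : layeredTreeAlphaLE G (layeredTreeAlpha G) := Nat.sInf_mem hne
  have hk : layeredTreeAlphaLE G k := by
    obtain ⟨td, L, hL, hb⟩ := hmem
    exact ⟨td, L, hL, fun t i I hI => (hb t i I hI).trans h⟩
  obtain ⟨td, L, hL, hb⟩ := hk
  rcases Nat.eq_zero_or_pos (Fintype.card V) with hV0 | hVpos
  · -- empty graph
    haveI : IsEmpty V := Fintype.card_eq_zero_iff.mp hV0
    have h0 : treeAlphaLE G 0 := by
      refine ⟨⟨Unit, inferInstance, ⊥, ⟨connected_of_subsingleton _, SimpleGraph.isAcyclic_bot⟩,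
        fun _ => Set.univ, fun v => isEmptyElim v, fun u v _ => isEmptyElim u,
        fun v => isEmptyElim v⟩, fun t I hI => ?_⟩
      calc I.card ≤ Fintype.card V := Finset.card_le_univ I
        _ = 0 := hV0
    have : treeAlpha G = 0 := Nat.le_zero.mp (Nat.sInf_le h0)
    rw [this]
    exact_mod_cast hsqrt0
  · -- main case
    have hkpos : 0 < k := by
      by_contra hk0
      push_neg at hk0
      obtain ⟨v⟩ := Fintype.card_pos_iff.mp hVpos
      obtain ⟨t, ht⟩ := td.mem_bag v
      have h1 : IsIndepSetIn G (td.bag t ∩ {w | L w = L v}) {v} := by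
        constructor
        · intro w hw
          rw [Finset.coe_singleton, Set.mem_singleton_iff] at hw
          subst hw
          exact ⟨ht, rfl⟩
        · intro a ha b hb hab
          rw [Finset.mem_singleton] at ha hb
          exact absurd (ha.trans hb.symm) hab
      have := hb t (L v) {v} h1
      simp at this
      omega
    set n : ℕ := Fintype.card V with hn
    set s : ℝ := Real.sqrt ((k : ℝ) * n) with hs
    have hkn : (0 : ℝ) < (k : ℝ) * n := by
      have : (0:ℝ) < k := by exact_mod_cast hkpos
      have : (0:ℝ) < n := by exact_mod_cast hVpos
      positivity
    have hspos : 0 < s := Real.sqrt_pos.mpr hkn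
    have hs2 : s * s = (k : ℝ) * n := Real.mul_self_sqrt hkn.le
    have hkR : (0:ℝ) < k := by exact_mod_cast hkpos
    set p : ℕ := ⌈s / k⌉₊ with hpdef
    have hppos : 0 < p := Nat.ceil_pos.mpr (by positivity)
    obtain ⟨i, hiR, hmin⟩ := Finset.exists_min_image (Finset.range p)
      (fun i => (Finset.univ.filter (fun v => L v % p = i)).card)
      ⟨0, Finset.mem_range.mpr hppos⟩
    have hi : i < p := Finset.mem_range.mp hiR
    have hsumfib : (Finset.univ : Finset V).card
        = ∑ r ∈ Finset.range p, (Finset.univ.filter (fun v => L v % p = r)).card :=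
      Finset.card_eq_sum_card_fiberwise (fun v _ => Finset.mem_range.mpr (Nat.mod_lt _ hppos))
    have hSn : p * (Finset.univ.filter (fun v => L v % p = i)).card ≤ n := by
      have h1 : ∑ _r ∈ Finset.range p, (Finset.univ.filter (fun v => L v % p = i)).card
          ≤ ∑ r ∈ Finset.range p, (Finset.univ.filter (fun v => L v % p = r)).card :=
        Finset.sum_le_sum (fun r hr => hmin r hr)
      rw [Finset.sum_const, Finset.card_range, smul_eq_mul] at h1
      have h2 : (Finset.univ : Finset V).card = n := rfl
      omega
    have hex := main_construct G td L hL k p i hppos hi hb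
    have htle : treeAlpha G ≤ (p - 1) * k
        + (Finset.univ.filter (fun v => L v % p = i)).card := Nat.sInf_le hex
    set c : ℕ := (Finset.univ.filter (fun v => L v % p = i)).card with hc
    -- real arithmetic
    have hcast : (treeAlpha G : ℝ) ≤ ((p - 1) * k + c : ℕ) := by exact_mod_cast htle
    refine hcast.trans ?_
    have hp1 : ((p - 1 : ℕ) : ℝ) = (p : ℝ) - 1 := by
      have : 1 ≤ p := hppos
      push_cast [Nat.cast_sub this]
      ring
    have hplt : (p : ℝ) < s / k + 1 := Nat.ceil_lt_add_one (by positivity)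
    have hpge : s / k ≤ (p : ℝ) := Nat.le_ceil _
    have hb1 : ((p - 1 : ℕ) : ℝ) * k ≤ s := by
      rw [hp1]
      have h1 : (p : ℝ) - 1 ≤ s / k := by linarith
      calc ((p : ℝ) - 1) * k ≤ (s / k) * k := by
            apply mul_le_mul_of_nonneg_right h1 hkR.le
        _ = s := by field_simp
    have hb2 : (c : ℝ) ≤ s := by
      have h1 : (p : ℝ) * c ≤ n := by exact_mod_cast hSn
      have h2 : (0:ℝ) ≤ c := Nat.cast_nonneg c
      -- from s/k ≤ p : c * (s/k) ≤ c * p ≤ n, so c * s ≤ n * k = s * s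
      have h3 : (c : ℝ) * (s / k) ≤ (c : ℝ) * p := mul_le_mul_of_nonneg_left hpge h2
      have h4 : (c : ℝ) * s ≤ (n : ℝ) * k := by
        have h5 : (c : ℝ) * (s / k) * k = c * s := by field_simp
        nlinarith
      nlinarith
    push_cast
    push_cast at hb1
    linarith [hb1, hb2]
end

section
/- If a graph G has layered tree-independence number at most ℓ, then for every r ∈ ℕ and every vertex v of G, the subgraph of G induced by the r-closed neighborhood N^r[v] has tree-independence number at most ℓ·(2r + 1). -/
open Classical

lemma walk_layer_bound {V : Type} {G : SimpleGraph V} {L : V → ℕ} (hL : IsLayering G L) :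
    ∀ {u w : V} (p : G.Walk u w), (L u : ℤ) ≤ L w + p.length ∧ (L w : ℤ) ≤ L u + p.length := by
  intro u w p
  induction p with
  | nil => simp
  | @cons a b c h p ih =>
    have h1 := hL h
    have h2 := hL h.symm
    obtain ⟨i1, i2⟩ := ih
    simp only [SimpleGraph.Walk.length_cons]
    push_cast
    omega

/-- If `G` has layered tree-independence number at most `ℓ`, then for every `r`
and vertex `v`, the subgraph induced by the `r`-closed neighborhood of `v` has
tree-independence number at most `ℓ·(2r+1)`. -/
theorem stmt1 {V : Type} [Fintype V] (G : SimpleGraph V) (l : ℕ)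
    (h : layeredTreeAlpha G ≤ l) (r : ℕ) (v : V) :
    treeAlpha (G.induce {u | G.Reachable v u ∧ G.dist v u ≤ r}) ≤ l * (2 * r + 1) := by
  classical
  -- Step 1: extract a witness for layered tree-independence ≤ l
  have hne : {k | layeredTreeAlphaLE G k}.Nonempty := by
    refine ⟨Fintype.card V, ?_⟩
    refine ⟨⟨Unit, inferInstance, ⊥, ?_, fun _ => Set.univ, fun v => ⟨(), trivial⟩,
      fun u v _ => ⟨(), trivial, trivial⟩, fun v => ?_⟩, fun _ => 0, ?_, ?_⟩
    · constructor
      · exact ⟨fun a b => by rw [Subsingleton.elim a b]⟩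
      · intro x p hp
        cases p with
        | nil => exact hp.ne_nil rfl
        | cons h _ => exact h.elim
    · haveI : Nonempty {t : Unit | v ∈ (Set.univ : Set V)} := ⟨⟨(), trivial⟩⟩
      exact ⟨fun a b => by rw [Subsingleton.elim a b]⟩
    · intro u v _; simp
    · intro t i I hI
      exact Finset.card_le_univ I
  have hmem : layeredTreeAlphaLE G (sInf {k | layeredTreeAlphaLE G k}) := Nat.sInf_mem hne
  obtain ⟨td, L, hLay, hbag⟩ := hmem
  have hbag' : ∀ (t : td.ι) (i : ℕ), IndepLE G (td.bag t ∩ {v | L v = i}) l :=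
    fun t i I hI => (hbag t i I hI).trans h
  -- Step 2: notation
  set S : Set V := {u | G.Reachable v u ∧ G.dist v u ≤ r} with hS
  -- layer bound on S
  have hlayer : ∀ u ∈ S, L v ≤ L u + r ∧ L u ≤ L v + r := by
    rintro u ⟨hreach, hdist⟩
    obtain ⟨p, hp⟩ := hreach.exists_walk_length_eq_dist
    have := walk_layer_bound hLay p
    omega
  -- Step 3: build the restricted tree decomposition
  have hTD : treeAlphaLE (G.induce S) (l * (2 * r + 1)) := by
    refine ⟨⟨td.ι, td.fin, td.T, td.isTree, fun t => Subtype.val ⁻¹' td.bag t,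
      fun u => td.mem_bag u, fun u w hadj => td.edge_bag hadj,
      fun u => td.bag_connected u.1⟩, ?_⟩
    intro t I hI
    obtain ⟨hsub, hind⟩ := hI
    set J : Finset V := I.image Subtype.val with hJ
    have hJcard : J.card = I.card := Finset.card_image_of_injective _ Subtype.val_injective
    have hJmem : ∀ u ∈ J, u ∈ S ∧ u ∈ td.bag t := by
      intro u hu
      obtain ⟨a, ha, rfl⟩ := Finset.mem_image.mp hu
      exact ⟨a.2, hsub ha⟩
    have hfiber : ∀ u ∈ J, L u ∈ Finset.Icc (L v - r) (L v + r) := by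
      intro u hu
      have h1 := hlayer u (hJmem u hu).1
      simp only [Finset.mem_Icc]
      omega
    have hsum : J.card = ∑ i ∈ Finset.Icc (L v - r) (L v + r),
        (J.filter (fun u => L u = i)).card :=
      Finset.card_eq_sum_card_fiberwise hfiber
    have hfbound : ∀ i ∈ Finset.Icc (L v - r) (L v + r),
        (J.filter (fun u => L u = i)).card ≤ l := by
      intro i _
      apply hbag' t i
      constructor
      · intro u hu
        have hu' := Finset.mem_filter.mp hu
        exact ⟨(hJmem u hu'.1).2, hu'.2⟩
      · intro a ha b hb hne
        have ha' := Finset.mem_filter.mp ha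
        have hb' := Finset.mem_filter.mp hb
        obtain ⟨a', ha'', rfl⟩ := Finset.mem_image.mp ha'.1
        obtain ⟨b', hb'', rfl⟩ := Finset.mem_image.mp hb'.1
        have hne' : a' ≠ b' := fun e => hne (congrArg Subtype.val e)
        have := hind a' ha'' b' hb'' hne'
        intro hadj
        exact this ((SimpleGraph.comap_adj).mpr hadj)
    calc I.card = J.card := hJcard.symm
      _ = ∑ i ∈ Finset.Icc (L v - r) (L v + r), (J.filter (fun u => L u = i)).card := hsum
      _ ≤ ∑ _i ∈ Finset.Icc (L v - r) (L v + r), l := Finset.sum_le_sum hfbound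
      _ = (Finset.Icc (L v - r) (L v + r)).card * l := by rw [Finset.sum_const, smul_eq_mul]
      _ ≤ (2 * r + 1) * l := by
          apply Nat.mul_le_mul_right
          rw [Nat.card_Icc]
          omega
      _ = l * (2 * r + 1) := Nat.mul_comm _ _
  exact Nat.sInf_le hTD
end

section
/- For every n ≥ 1, the layered tree-independence number of the complete bipartite graph K_{n,n} is at least n/5. -/
open Classical

section Aux

open SimpleGraph

variable {ι : Type*} {T : SimpleGraph ι}

/-- The set of vertices reachable from `t'` by a walk avoiding `t`. -/
def TIbranch (T : SimpleGraph ι) (t t' : ι) : Set ι := {z | ∃ w : T.Walk t' z, t ∉ w.support}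

lemma TIsep (hT : T.IsTree) {t t' z : ι} (h : T.Adj t t') (hz : z ∈ TIbranch T t t')
    (w : T.Walk t z) : t' ∈ w.support := by
  by_contra h'
  obtain ⟨w1, hw1⟩ := hz
  have ht : t ∉ w1.bypass.support := fun hh => hw1 (w1.support_bypass_subset hh)
  have hP : (Walk.cons h w1.bypass).IsPath := (w1.bypass_isPath).cons ht
  have ht' : t' ∉ w.bypass.support := fun hh => h' (w.support_bypass_subset hh)
  obtain ⟨p, -, hu⟩ := hT.existsUnique_path t z
  have e : (Walk.cons h w1.bypass) = w.bypass := (hu _ hP).trans (hu _ w.bypass_isPath).symm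
  apply ht'
  rw [← e, Walk.support_cons]
  exact List.mem_cons_of_mem _ w1.bypass.start_mem_support

lemma TIbranch_disj (hT : T.IsTree) {t t' t'' z : ι} (h1 : T.Adj t' t) (h2 : T.Adj t' t'')
    (hne : t ≠ t'') (hz1 : z ∈ TIbranch T t' t) (hz2 : z ∈ TIbranch T t' t'') : False := by
  obtain ⟨w, hw⟩ := hz1
  have hW : t'' ∈ (Walk.cons h1 w).support := TIsep hT h2 hz2 (Walk.cons h1 w)
  rw [Walk.support_cons] at hW
  have ht'' : t'' ∈ w.support := by
    rcases List.mem_cons.mp hW with h | h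
    · exact absurd h.symm h2.ne
    · exact h
  set u := w.takeUntil t'' ht'' with hu
  have hus : t' ∉ u.support := fun hh => hw (w.support_takeUntil_subset _ hh)
  have hq : t' ∉ u.reverse.bypass.support := fun hh => by
    have := u.reverse.support_bypass_subset hh
    rw [Walk.support_reverse, List.mem_reverse] at this
    exact hus this
  have hP1 : (Walk.cons h2 u.reverse.bypass).IsPath := (u.reverse.bypass_isPath).cons hq
  have hP2 : (Walk.cons h1 (Walk.nil)).IsPath := by
    simp [Walk.cons_isPath_iff, h1.ne]
  obtain ⟨p, -, hu2⟩ := hT.existsUnique_path t' t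
  have e : (Walk.cons h2 u.reverse.bypass) = (Walk.cons h1 Walk.nil) :=
    (hu2 _ hP1).trans (hu2 _ hP2).symm
  have : t'' ∈ (Walk.cons h1 (Walk.nil : T.Walk t t)).support := by
    rw [← e, Walk.support_cons]
    exact List.mem_cons_of_mem _ u.reverse.bypass.start_mem_support
  rw [Walk.support_cons, Walk.support_nil] at this
  rcases List.mem_cons.mp this with h | h
  · exact h2.ne h.symm
  · rw [List.mem_singleton] at h
    exact hne h.symm

lemma TIbranch_mono (hT : T.IsTree) {t t' t'' : ι} (h1 : T.Adj t t') (h2 : T.Adj t' t'')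
    (hne : t'' ≠ t) : TIbranch T t' t'' ⊆ TIbranch T t t' := by
  intro z hz
  obtain ⟨w, hw⟩ := hz
  have htw : t ∉ w.support := by
    intro hh
    have hb1 : t ∈ TIbranch T t' t'' :=
      ⟨w.takeUntil t hh, fun h3 => hw (w.support_takeUntil_subset _ h3)⟩
    have hb2 : t ∈ TIbranch T t' t := ⟨Walk.nil, by simp [h1.ne']⟩
    exact TIbranch_disj hT h1.symm h2 hne.symm hb2 hb1
  refine ⟨Walk.cons h2 w, ?_⟩
  rw [Walk.support_cons]
  intro hh
  rcases List.mem_cons.mp hh with h | h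
  · exact h1.ne h
  · exact htw h

lemma TIwalk_conn {S : Set ι} (hc : (T.induce S).Connected) :
    ∀ x ∈ S, ∀ y ∈ S, ∃ w : T.Walk x y, ∀ z ∈ w.support, z ∈ S := by
  intro x hx y hy
  obtain ⟨w⟩ := hc.preconnected ⟨x, hx⟩ ⟨y, hy⟩
  let f : T.induce S →g T := ⟨Subtype.val, fun {a b} hab => hab⟩
  refine ⟨w.map f, ?_⟩
  intro z hz
  rw [Walk.support_map, List.mem_map] at hz
  obtain ⟨⟨z', hz'⟩, -, rfl⟩ := hz
  exact hz'

lemma TIpointer (hT : T.IsTree) {S : Set ι}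
    (hconn : ∀ x ∈ S, ∀ y ∈ S, ∃ w : T.Walk x y, ∀ z ∈ w.support, z ∈ S)
    {s0 : ι} (hs0 : s0 ∈ S) {t : ι} (ht : t ∉ S) :
    ∃ t', T.Adj t t' ∧ S ⊆ TIbranch T t t' := by
  obtain ⟨w0⟩ := hT.isConnected.preconnected t s0
  have hnn : ¬ w0.bypass.Nil := Walk.not_nil_of_ne (fun h => ht (h ▸ hs0))
  obtain ⟨t', h, q, hq⟩ := Walk.not_nil_iff.mp hnn
  have hP : (Walk.cons h q).IsPath := hq ▸ w0.bypass_isPath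
  rw [Walk.cons_isPath_iff] at hP
  refine ⟨t', h, ?_⟩
  intro z hz
  obtain ⟨w, hw⟩ := hconn s0 hs0 z hz
  refine ⟨q.append w, ?_⟩
  rw [Walk.mem_support_append_iff]
  rintro (hh | hh)
  · exact hP.2 hh
  · exact ht (hw t hh)

lemma TIexists_big_bag (n : ℕ) (td : TreeDecomp (completeBipartiteGraph (Fin n) (Fin n))) :
    ∃ t, (∀ a : Fin n, Sum.inl a ∈ td.bag t) ∨ (∀ b : Fin n, Sum.inr b ∈ td.bag t) := by
  classical
  by_contra hcon
  push_neg at hcon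
  haveI := td.fin
  have hT := td.isTree
  have key : ∀ t : td.ι, ∃ t', td.T.Adj t t' ∧
      ∃ a : Fin n, {s | Sum.inl a ∈ td.bag s} ⊆ TIbranch td.T t t' := by
    intro t
    obtain ⟨⟨a, ha⟩, -⟩ := hcon t
    obtain ⟨s0, hs0⟩ := td.mem_bag (Sum.inl a)
    obtain ⟨t', h1, h2⟩ :=
      TIpointer hT (TIwalk_conn (td.bag_connected (Sum.inl a))) hs0 ha
    exact ⟨t', h1, a, h2⟩
  let Q : td.ι × td.ι → Prop := fun p => td.T.Adj p.1 p.2 ∧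
      ∃ a : Fin n, {s | Sum.inl a ∈ td.bag s} ⊆ TIbranch td.T p.1 p.2
  have hQne : (Finset.univ.filter fun p => Q p).Nonempty := by
    obtain ⟨t0⟩ := hT.isConnected.nonempty
    obtain ⟨t', h1, a, ha⟩ := key t0
    exact ⟨(t0, t'), by simp only [Finset.mem_filter, Finset.mem_univ, true_and]
                        exact ⟨h1, a, ha⟩⟩
  obtain ⟨p, hpmem, hpmin⟩ :=
    Finset.exists_min_image _ (fun p : td.ι × td.ι => (TIbranch td.T p.1 p.2).ncard) hQne
  obtain ⟨t, t'⟩ := p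
  rw [Finset.mem_filter] at hpmem
  obtain ⟨-, hadj, a1, ha1⟩ := hpmem
  obtain ⟨t'', h2, a2, ha2⟩ := key t'
  by_cases htt : t'' = t
  · -- the final case: every right vertex is in bag t
    rw [htt] at ha2
    have hBt : ∀ b : Fin n, Sum.inr b ∈ td.bag t := by
      intro b
      have hadj1 : (completeBipartiteGraph (Fin n) (Fin n)).Adj (Sum.inl a1) (Sum.inr b) := by
        simp [completeBipartiteGraph]
      have hadj2 : (completeBipartiteGraph (Fin n) (Fin n)).Adj (Sum.inl a2) (Sum.inr b) := by
        simp [completeBipartiteGraph]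
      obtain ⟨s1, hs1a, hs1b⟩ := td.edge_bag hadj1
      obtain ⟨s2, hs2a, hs2b⟩ := td.edge_bag hadj2
      have hx : s1 ∈ TIbranch td.T t t' := ha1 hs1a
      have hy : s2 ∈ TIbranch td.T t' t := ha2 hs2a
      obtain ⟨w, hw⟩ := TIwalk_conn (td.bag_connected (Sum.inr b)) s1 hs1b s2 hs2b
      have htw : t ∈ w.support := by
        by_contra htw
        obtain ⟨wx, hwx⟩ := hx
        have := TIsep hT hadj.symm hy (wx.append w)
        rw [Walk.mem_support_append_iff] at this
        rcases this with h | h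
        · exact hwx h
        · exact htw h
      exact hw t htw
    obtain ⟨-, ⟨b, hb⟩⟩ := hcon t
    exact hb (hBt b)
  · -- strict decrease: contradiction with minimality
    have hsub : TIbranch td.T t' t'' ⊆ TIbranch td.T t t' := TIbranch_mono hT hadj h2 htt
    have hst : t' ∈ TIbranch td.T t t' := ⟨Walk.nil, by simp [hadj.ne]⟩
    have hnt : t' ∉ TIbranch td.T t' t'' := by
      rintro ⟨w, hw⟩
      exact hw w.end_mem_support
    have hcard : (TIbranch td.T t' t'').ncard < (TIbranch td.T t t').ncard :=
      Set.ncard_lt_ncard ((Set.ssubset_iff_of_subset hsub).mpr ⟨t', hst, hnt⟩)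
        (Set.toFinite _)
    have hmem2 : (t', t'') ∈ Finset.univ.filter fun p => Q p := by
      simp only [Finset.mem_filter, Finset.mem_univ, true_and]
      exact ⟨h2, a2, ha2⟩
    have := hpmin _ hmem2
    simp only at this
    omega

lemma TIwindow_bound {V : Type*} (G : SimpleGraph V) (B : Set V) (L : V → ℕ) {k n : ℕ}
    (hk : ∀ i : ℕ, IndepLE G (B ∩ {v | L v = i}) k)
    (g : Fin n → V) (hinj : Function.Injective g) (hbag : ∀ x, g x ∈ B)
    (hnadj : ∀ x y : Fin n, ¬ G.Adj (g x) (g y)) (j : ℕ)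
    (hwin : ∀ x, L (g x) = j - 1 ∨ L (g x) = j ∨ L (g x) = j + 1) :
    n ≤ 3 * k := by
  classical
  have hF : ∀ i : ℕ, (Finset.univ.filter fun x : Fin n => L (g x) = i).card ≤ k := by
    intro i
    have := hk i ((Finset.univ.filter fun x : Fin n => L (g x) = i).image g) ?_
    · rwa [Finset.card_image_of_injective _ hinj] at this
    constructor
    · intro v hv
      simp only [Finset.coe_image, Set.mem_image, Finset.mem_coe, Finset.mem_filter] at hv
      obtain ⟨x, ⟨-, hx⟩, rfl⟩ := hv
      exact ⟨hbag x, hx⟩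
    · intro u hu v hv hne
      rw [Finset.mem_image] at hu hv
      obtain ⟨x, -, rfl⟩ := hu
      obtain ⟨y, -, rfl⟩ := hv
      exact hnadj x y
  have hcover : (Finset.univ : Finset (Fin n)) ⊆
      ((Finset.univ.filter fun x : Fin n => L (g x) = j - 1) ∪
       (Finset.univ.filter fun x : Fin n => L (g x) = j)) ∪
       (Finset.univ.filter fun x : Fin n => L (g x) = j + 1) := by
    intro x _hx
    simp only [Finset.mem_union, Finset.mem_filter, Finset.mem_univ, true_and]
    rcases hwin x with h | h | h
    · exact Or.inl (Or.inl h)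
    · exact Or.inl (Or.inr h)
    · exact Or.inr h
  have := Finset.card_le_card hcover
  rw [Finset.card_univ, Fintype.card_fin] at this
  have h1 := Finset.card_union_le
    ((Finset.univ.filter fun x : Fin n => L (g x) = j - 1) ∪
     (Finset.univ.filter fun x : Fin n => L (g x) = j))
    (Finset.univ.filter fun x : Fin n => L (g x) = j + 1)
  have h2 := Finset.card_union_le
    (Finset.univ.filter fun x : Fin n => L (g x) = j - 1)
    (Finset.univ.filter fun x : Fin n => L (g x) = j)
  have k1 := hF (j - 1); have k2 := hF j; have k3 := hF (j + 1)
  omega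

lemma TIindep_le_n (n : ℕ) (S : Set (Fin n ⊕ Fin n)) :
    IndepLE (completeBipartiteGraph (Fin n) (Fin n)) S n := by
  classical
  intro I hI
  by_cases h : ∀ x ∈ I, x.isLeft
  · have : I ⊆ (Finset.univ : Finset (Fin n)).map ⟨Sum.inl, Sum.inl_injective⟩ := by
      intro x hx
      obtain ⟨a, rfl⟩ := Sum.isLeft_iff.mp (h x hx)
      simp
    have := Finset.card_le_card this
    simpa using this
  · push_neg at h
    obtain ⟨x0, hx0, hx0r⟩ := h
    have hall : ∀ x ∈ I, x.isRight := by
      intro x hx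
      rcases x with a | b
      · exfalso
        rcases x0 with a0 | b0
        · exact hx0r rfl
        · exact hI.2 _ hx _ hx0 (by simp) (by simp [completeBipartiteGraph])
      · rfl
    have : I ⊆ (Finset.univ : Finset (Fin n)).map ⟨Sum.inr, Sum.inr_injective⟩ := by
      intro x hx
      obtain ⟨b, rfl⟩ := Sum.isRight_iff.mp (hall x hx)
      simp
    have := Finset.card_le_card this
    simpa using this

/-- The trivial one-bag tree decomposition. -/
noncomputable def TItrivial (n : ℕ) : TreeDecomp (completeBipartiteGraph (Fin n) (Fin n)) where
  ι := Unit
  fin := inferInstance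
  T := ⊥
  isTree := by
    constructor
    · rw [SimpleGraph.connected_iff]
      refine ⟨?_, ⟨()⟩⟩
      intro a b
      rw [Subsingleton.elim a b]
    · exact SimpleGraph.isAcyclic_bot
  bag := fun _ => Set.univ
  mem_bag := fun v => ⟨(), trivial⟩
  edge_bag := fun u v _ => ⟨(), trivial, trivial⟩
  bag_connected := by
    intro v
    rw [SimpleGraph.connected_iff]
    refine ⟨?_, ⟨⟨(), trivial⟩⟩⟩
    intro a b
    rw [Subsingleton.elim a b]

lemma TInonempty (n : ℕ) :
    layeredTreeAlphaLE (completeBipartiteGraph (Fin n) (Fin n)) n := by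
  refine ⟨TItrivial n, fun _ => 0, fun u v _ => by norm_num, fun t i => ?_⟩
  intro I hI
  exact TIindep_le_n n _ I hI

lemma TImain (n k : ℕ) (hn : 1 ≤ n)
    (h : layeredTreeAlphaLE (completeBipartiteGraph (Fin n) (Fin n)) k) : n ≤ 5 * k := by
  obtain ⟨td, L, hL, hk⟩ := h
  obtain ⟨t, hcase⟩ := TIexists_big_bag n td
  have h3 : n ≤ 3 * k := by
    rcases hcase with hA | hB
    · refine TIwindow_bound _ (td.bag t) L (hk t) Sum.inl Sum.inl_injective hA
        (fun x y => by simp [completeBipartiteGraph]) (L (Sum.inr ⟨0, hn⟩)) ?_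
      intro x
      have hadj : (completeBipartiteGraph (Fin n) (Fin n)).Adj (Sum.inl x) (Sum.inr ⟨0, hn⟩) := by
        simp [completeBipartiteGraph]
      have w1 := hL hadj
      have w2 := hL hadj.symm
      omega
    · refine TIwindow_bound _ (td.bag t) L (hk t) Sum.inr Sum.inr_injective hB
        (fun x y => by simp [completeBipartiteGraph]) (L (Sum.inl ⟨0, hn⟩)) ?_
      intro x
      have hadj : (completeBipartiteGraph (Fin n) (Fin n)).Adj (Sum.inl ⟨0, hn⟩) (Sum.inr x) := by
        simp [completeBipartiteGraph]
      have w1 := hL hadj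
      have w2 := hL hadj.symm
      omega
  omega

end Aux

/-- For every `n ≥ 1`, the layered tree-independence number of `K_{n,n}` is at
least `n/5`. -/
theorem stmt2 (n : ℕ) (hn : 1 ≤ n) :
    (n : ℝ) / 5 ≤ (layeredTreeAlpha (completeBipartiteGraph (Fin n) (Fin n)) : ℝ) := by
  have hne : {k | layeredTreeAlphaLE (completeBipartiteGraph (Fin n) (Fin n)) k}.Nonempty :=
    ⟨n, TInonempty n⟩
  have hmem := Nat.sInf_mem hne
  have h5 := TImain n _ hn hmem
  have h5' : (n : ℝ) ≤ 5 * (layeredTreeAlpha (completeBipartiteGraph (Fin n) (Fin n)) : ℝ) := by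
    exact_mod_cast h5
  linarith
end

section
/- Let d be a positive integer. If a graph G has layered tree-independence number at most k, then the (1+2d)-th power G^{1+2d} has layered tree-independence number at most (1+4d)·k. -/
open Classical

section MyAux

open SimpleGraph

variable {V : Type*} {G : SimpleGraph V}

/-- Splitting a walk at position `n`. -/
lemma my_walk_split {u v : V} (w : G.Walk u v) (n : ℕ) :
    ∃ (w1 : G.Walk u (w.getVert n)) (w2 : G.Walk (w.getVert n) v),
      w1.length ≤ n ∧ w2.length ≤ w.length - n := by
  induction w generalizing n with
  | nil => exact ⟨(Walk.nil).copy rfl rfl, (Walk.nil).copy rfl rfl, by simp, by simp⟩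
  | cons h q ih =>
    cases n with
    | zero =>
      refine ⟨(Walk.nil).copy rfl (by simp), (Walk.cons h q).copy (by simp) rfl, by simp, by simp⟩
    | succ n =>
      obtain ⟨w1, w2, h1, h2⟩ := ih n
      refine ⟨(Walk.cons h w1).copy rfl (by simp [Walk.getVert_cons_succ]),
        w2.copy (by simp [Walk.getVert_cons_succ]) rfl, ?_, ?_⟩
      · simpa using h1
      · simp only [Walk.length_copy, Walk.length_cons]
        exact (Walk.length_copy _ _ _).trans_le (by omega)

/-- Reachability inside a set of vertices. -/
def ReachIn {ι : Type*} (T : SimpleGraph ι) (S : Set ι) (a b : ι) : Prop :=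
  ∃ w : T.Walk a b, ∀ x ∈ w.support, x ∈ S

lemma ReachIn.mono {ι : Type*} {T : SimpleGraph ι} {S S' : Set ι} {a b : ι}
    (h : ReachIn T S a b) (hss : S ⊆ S') : ReachIn T S' a b := by
  obtain ⟨w, hw⟩ := h
  exact ⟨w, fun x hx => hss (hw x hx)⟩

lemma ReachIn.trans {ι : Type*} {T : SimpleGraph ι} {S : Set ι} {a b c : ι}
    (h1 : ReachIn T S a b) (h2 : ReachIn T S b c) : ReachIn T S a c := by
  obtain ⟨w1, hw1⟩ := h1
  obtain ⟨w2, hw2⟩ := h2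
  refine ⟨w1.append w2, fun x hx => ?_⟩
  rcases (Walk.mem_support_append_iff _ _).mp hx with h | h
  · exact hw1 x h
  · exact hw2 x h

lemma ReachIn.symm {ι : Type*} {T : SimpleGraph ι} {S : Set ι} {a b : ι}
    (h : ReachIn T S a b) : ReachIn T S b a := by
  obtain ⟨w, hw⟩ := h
  exact ⟨w.reverse, fun x hx => hw x (by simpa using hx)⟩

lemma reachIn_up {ι : Type*} {T : SimpleGraph ι} {S : Set ι} {a b : ι} (w : T.Walk a b) :
    (∀ x ∈ w.support, x ∈ S) → ∀ (ha : a ∈ S) (hb : b ∈ S),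
      (T.induce S).Reachable ⟨a, ha⟩ ⟨b, hb⟩ := by
  induction w with
  | nil => exact fun _ _ _ => Reachable.refl _
  | @cons x y z h q ih =>
    intro hw ha hb
    have hc : y ∈ S := hw y (by simp [Walk.support_cons])
    refine (SimpleGraph.Adj.reachable ?_).trans
      (ih (fun x hx => hw x (by simp [Walk.support_cons, hx])) hc hb)
    exact h

lemma reachIn_down {ι : Type*} {T : SimpleGraph ι} {A : Set ι} {a b : A}
    (w : (T.induce A).Walk a b) : ReachIn T A a.1 b.1 := by
  induction w with
  | nil => exact ⟨Walk.nil, fun x hx => by simp at hx; subst hx; exact Subtype.coe_prop _⟩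
  | @cons x y z h q ih =>
    refine ReachIn.trans ⟨Walk.cons h Walk.nil, ?_⟩ ih
    intro t ht
    change t ∈ [x.1, y.1] at ht
    simp at ht
    rcases ht with rfl | rfl
    · exact x.2
    · exact y.2

lemma reachIn_of_connected {ι : Type*} {T : SimpleGraph ι} {A : Set ι}
    (hc : (T.induce A).Connected) {a b : ι} (ha : a ∈ A) (hb : b ∈ A) :
    ReachIn T A a b := by
  obtain ⟨w⟩ := hc.preconnected ⟨a, ha⟩ ⟨b, hb⟩
  exact reachIn_down w

lemma my_ltaLE_mono {k1 k2 : ℕ} (h : layeredTreeAlphaLE G k1) (hle : k1 ≤ k2) :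
    layeredTreeAlphaLE G k2 := by
  obtain ⟨td, L, h1, h2⟩ := h
  exact ⟨td, L, h1, fun t i I hI => (h2 t i I hI).trans hle⟩

lemma my_conn_subsingleton {α : Type*} [Subsingleton α] [Nonempty α] (T : SimpleGraph α) :
    T.Connected := by
  rw [SimpleGraph.connected_iff]
  refine ⟨fun a b => ?_, ‹_›⟩
  rw [Subsingleton.elim a b]

lemma my_ltaLE_card [Fintype V] : layeredTreeAlphaLE G (Fintype.card V) := by
  have htree : (⊥ : SimpleGraph Unit).IsTree := by
    constructor
    · exact my_conn_subsingleton _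
    · intro v c hc
      cases c with
      | nil => exact hc.ne_nil rfl
      | cons h q => simp at h
  refine ⟨⟨Unit, inferInstance, ⊥, htree, fun _ => Set.univ, fun v => ⟨(), trivial⟩,
      fun u v _ => ⟨(), trivial, trivial⟩, fun v => ?_⟩,
    fun _ => 0, fun u v _ => by simp, fun t i I _ => Finset.card_le_univ I⟩
  have : Nonempty {t : Unit | v ∈ Set.univ} := ⟨⟨(), trivial⟩⟩
  exact my_conn_subsingleton _

lemma my_ltaLE_of_le [Fintype V] {k : ℕ} (h : layeredTreeAlpha G ≤ k) :
    layeredTreeAlphaLE G k := by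
  have hne : {k | layeredTreeAlphaLE G k}.Nonempty := ⟨_, my_ltaLE_card⟩
  exact my_ltaLE_mono (Nat.sInf_mem hne) h

end MyAux

open SimpleGraph in
/-- If `G` has layered tree-independence number at most `k`, then `G^{1+2d}` has
layered tree-independence number at most `(1+4d)·k`. -/
theorem stmt3 {V : Type} [Fintype V] (G : SimpleGraph V) (d : ℕ) (hd : 1 ≤ d) (k : ℕ)
    (h : layeredTreeAlpha G ≤ k) :
    layeredTreeAlpha (gpower G (1 + 2 * d)) ≤ (1 + 4 * d) * k := by
  classical
  obtain ⟨td, L, hL, hk⟩ := my_ltaLE_of_le h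
  set p := 1 + 2 * d with hp
  have hppos : 0 < p := by omega
  set B : td.ι → Set V := fun t => {v | ∃ u, u ∈ td.bag t ∧ ∃ w : G.Walk u v, w.length ≤ d}
    with hBdef
  have hmem : ∀ v : V, ∃ t, v ∈ B t := by
    intro v
    obtain ⟨t, ht⟩ := td.mem_bag v
    exact ⟨t, v, ht, Walk.nil, by simp⟩
  have hAsub : ∀ (v u : V) (w : G.Walk u v), w.length ≤ d →
      {t | u ∈ td.bag t} ⊆ {t | v ∈ B t} := by
    intro v u w hw t ht
    exact ⟨u, ht, w, hw⟩
  have hwalkL : ∀ (u v : V) (w : G.Walk u v),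
      (L u : ℤ) ≤ L v + w.length ∧ (L v : ℤ) ≤ L u + w.length := by
    intro u v w
    induction w with
    | nil => simp
    | cons hadj q ih =>
      have h1 := hL hadj
      have h2 := hL hadj.symm
      simp only [Walk.length_cons] at *
      push_cast at *
      omega
  refine Nat.sInf_le ?_
  show layeredTreeAlphaLE _ _
  refine ⟨⟨td.ι, td.fin, td.T, td.isTree, B, hmem, ?_, ?_⟩, fun v => L v / p, ?_, ?_⟩
  · -- edge_bag
    rintro a b ⟨hne, w, hw⟩
    by_cases hlen : w.length ≤ d
    · obtain ⟨t, ht⟩ := td.mem_bag a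
      exact ⟨t, ⟨a, ht, Walk.nil, by simp⟩, ⟨a, ht, w, hlen⟩⟩
    · push_neg at hlen
      have hadj : G.Adj (w.getVert d) (w.getVert (d + 1)) := w.adj_getVert_succ hlen
      obtain ⟨w1, -, h1, -⟩ := my_walk_split w d
      obtain ⟨-, w2, -, h2⟩ := my_walk_split w (d + 1)
      obtain ⟨t, ht1, ht2⟩ := td.edge_bag hadj
      refine ⟨t, ⟨w.getVert d, ht1, w1.reverse, by simpa using h1⟩,
        ⟨w.getVert (d + 1), ht2, w2, by omega⟩⟩
  · -- bag_connected
    intro v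
    obtain ⟨t0, ht0⟩ := td.mem_bag v
    set S : Set td.ι := {t | v ∈ B t} with hS
    have base : ∀ s, v ∈ td.bag s → ReachIn td.T S s t0 := by
      intro s hs
      refine (reachIn_of_connected (td.bag_connected v) hs ht0).mono ?_
      rw [hS]
      exact hAsub v v Walk.nil (by simp)
    have key : ∀ (n : ℕ) (x : V) (wx : G.Walk x v), wx.length ≤ n → wx.length ≤ d →
        ∀ s, x ∈ td.bag s → ReachIn td.T S s t0 := by
      intro n
      induction n with
      | zero =>
        intro x wx hn _ s hs
        have hnil : wx.Nil := Walk.nil_iff_length_eq.mpr (by omega)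
        obtain rfl : x = v := hnil.eq
        exact base s hs
      | succ n ih =>
        intro x wx hn hd' s hs
        by_cases hnil : wx.Nil
        · obtain rfl : x = v := hnil.eq
          exact base s hs
        · obtain ⟨c, hadj, q, rfl⟩ := Walk.not_nil_iff.mp hnil
          obtain ⟨t1, ht1, ht1'⟩ := td.edge_bag hadj
          have hsub : {t' | x ∈ td.bag t'} ⊆ S := by
            rw [hS]
            exact hAsub v x (Walk.cons hadj q) hd'
          have step1 : ReachIn td.T S s t1 :=
            (reachIn_of_connected (td.bag_connected x) hs ht1).mono hsub
          have hq1 : q.length ≤ n := by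
            simp only [Walk.length_cons] at hn; omega
          have hq2 : q.length ≤ d := by
            simp only [Walk.length_cons] at hd'; omega
          exact step1.trans (ih c q hq1 hq2 t1 ht1')
    have hconn : ∀ s ∈ S, ReachIn td.T S s t0 := by
      intro s hs
      rw [hS] at hs
      obtain ⟨u, hu, w, hw⟩ := hs
      exact key w.length u w le_rfl hw s hu
    rw [SimpleGraph.connected_iff]
    constructor
    · rintro ⟨a, ha⟩ ⟨b, hb⟩
      obtain ⟨w, hwsup⟩ := (hconn a ha).trans (hconn b hb).symm
      exact reachIn_up w hwsup ha hb
    · obtain ⟨t, ht⟩ := hmem v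
      exact ⟨⟨t, ht⟩⟩
  · -- layering
    rintro u v ⟨hne, w, hw⟩
    have h1 := (hwalkL u v w).1
    have hval : L u ≤ L v + p := by
      have h2 : (L u : ℤ) ≤ L v + p := le_trans h1 (by push_cast; omega)
      exact_mod_cast h2
    have h3 : L u / p ≤ L v / p + 1 := by
      calc L u / p ≤ (L v + p) / p := Nat.div_le_div_right hval
        _ = L v / p + 1 := Nat.add_div_right _ hppos
    exact_mod_cast Nat.cast_le.mpr h3
  · -- independence
    intro t i I hI
    rcases I.eq_empty_or_nonempty with rfl | hIe
    · simp
    obtain ⟨v0, hv0, hmin⟩ := Finset.exists_min_image I L hIe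
    have hch : ∀ v : V, ∃ u : V, v ∈ I → u ∈ td.bag t ∧ ∃ w : G.Walk u v, w.length ≤ d := by
      intro v
      by_cases hv : v ∈ I
      · obtain ⟨u, hu⟩ := (hI.1 hv).1
        exact ⟨u, fun _ => hu⟩
      · exact ⟨v, fun hc => absurd hc hv⟩
    choose uf huf using hch
    have hufbag : ∀ v ∈ I, uf v ∈ td.bag t := fun v hv => (huf v hv).1
    have hufwalk : ∀ v ∈ I, ∃ w : G.Walk (uf v) v, w.length ≤ d := fun v hv => (huf v hv).2
    have hquot : ∀ v ∈ I, L v / p = i := fun v hv => (hI.1 hv).2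
    have hupper : ∀ v ∈ I, L v < L v0 + p := by
      intro v hv
      by_contra hcon
      push_neg at hcon
      have h1 : L v0 / p + 1 ≤ L v / p := by
        calc L v0 / p + 1 = (L v0 + p) / p := (Nat.add_div_right _ hppos).symm
          _ ≤ L v / p := Nat.div_le_div_right hcon
      rw [hquot v hv, hquot v0 hv0] at h1
      omega
    have hufL : ∀ v ∈ I, L v0 ≤ L (uf v) + d ∧ L (uf v) + d ≤ L v0 + 4 * d := by
      intro v hv
      obtain ⟨w, hw⟩ := hufwalk v hv
      have hwl := hwalkL (uf v) v w
      have h1 : (L (uf v) : ℤ) ≤ L v + d := le_trans hwl.1 (by push_cast; omega)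
      have h2 : (L v : ℤ) ≤ L (uf v) + d := le_trans hwl.2 (by push_cast; omega)
      have h3 : (L v0 : ℤ) ≤ L v := by exact_mod_cast hmin v hv
      have h4 : (L v : ℤ) < L v0 + p := by exact_mod_cast hupper v hv
      have hpz : (p : ℤ) = 1 + 2 * d := by push_cast [hp]; ring
      constructor
      · exact_mod_cast le_trans h3 h2
      · have h5 : (L (uf v) : ℤ) + d ≤ L v0 + 4 * d := by omega
        exact_mod_cast h5
    have hkey : ∀ v ∈ I, ∀ v' ∈ I, v ≠ v' → uf v ≠ uf v' ∧ ¬ G.Adj (uf v) (uf v') := by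
      intro v hv v' hv' hne
      obtain ⟨w, hw⟩ := hufwalk v hv
      obtain ⟨w', hw'⟩ := hufwalk v' hv'
      constructor
      · intro heq
        apply hI.2 v hv v' hv' hne
        refine ⟨hne, w.reverse.append (w'.copy heq.symm rfl), ?_⟩
        simp only [Walk.length_append, Walk.length_reverse, Walk.length_copy]
        omega
      · intro hadj
        apply hI.2 v hv v' hv' hne
        refine ⟨hne, w.reverse.append (Walk.cons hadj w'), ?_⟩
        simp only [Walk.length_append, Walk.length_reverse, Walk.length_cons]
        omega
    have hfib : I.card = ∑ b ∈ Finset.Icc (L v0) (L v0 + 4 * d),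
        (I.filter (fun v => L (uf v) + d = b)).card := by
      apply Finset.card_eq_sum_card_fiberwise
      intro v hv
      have := hufL v hv
      simp only [Finset.mem_coe, Finset.mem_Icc]
      omega
    rw [hfib]
    have hbound : ∀ b ∈ Finset.Icc (L v0) (L v0 + 4 * d),
        (I.filter (fun v => L (uf v) + d = b)).card ≤ k := by
      intro b _
      set F := I.filter (fun v => L (uf v) + d = b) with hF
      have hFI : ∀ v ∈ F, v ∈ I := fun v hv => (Finset.mem_filter.mp hv).1
      have hinj : Set.InjOn uf ↑F := by
        intro x hx y hy hxy
        by_contra hne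
        exact (hkey x (hFI x hx) y (hFI y hy) hne).1 hxy
      rw [← Finset.card_image_of_injOn hinj]
      apply hk t (b - d)
      constructor
      · intro x hx
        obtain ⟨v, hvF, rfl⟩ := Finset.mem_image.mp hx
        have hvb := (Finset.mem_filter.mp hvF).2
        exact ⟨hufbag v (hFI v hvF), by simp only [Set.mem_setOf_eq]; omega⟩
      · intro x hx y hy hxy
        obtain ⟨v, hvF, rfl⟩ := Finset.mem_image.mp hx
        obtain ⟨v', hvF', rfl⟩ := Finset.mem_image.mp hy
        have hne : v ≠ v' := fun hvv => hxy (by rw [hvv])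
        exact (hkey v (hFI v hvF) v' (hFI v' hvF') hne).2
    calc ∑ b ∈ Finset.Icc (L v0) (L v0 + 4 * d), (I.filter (fun v => L (uf v) + d = b)).card
        ≤ ∑ _b ∈ Finset.Icc (L v0) (L v0 + 4 * d), k := Finset.sum_le_sum hbound
      _ = (Finset.Icc (L v0) (L v0 + 4 * d)).card * k := by
          rw [Finset.sum_const, smul_eq_mul]
      _ = (1 + 4 * d) * k := by
          rw [Nat.card_Icc]
          congr 1
          omega
end

section
/- Let r > 2 be an integer and m ∈ ℕ, and let n be an integer with n > m/(1 − 2/r). Then every (1 − 1/r)-general cover 𝒞 of the complete bipartite graph K_{n,n} contains an element C such that the subgraph of K_{n,n} induced by C contains K_{m,m} as an induced subgraph; in particular, tree-α(K_{n,n}[C]) ≥ m, so no (1 − 1/r)-general cover of K_{n,n} has tree-independence number less than m. -/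
open Classical

section AuxiliaryLemmas

open SimpleGraph

variable {ι : Type*}

/-- Connectivity of a vertex subset via walks in the ambient graph. -/
def ConnIn (T : SimpleGraph ι) (S : Set ι) : Prop :=
  S.Nonempty ∧ ∀ x ∈ S, ∀ y ∈ S, ∃ w : T.Walk x y, ∀ z ∈ w.support, z ∈ S

def outHom (T : SimpleGraph ι) (S : Set ι) : T.induce S →g T :=
  ⟨Subtype.val, fun {_ _} h => h⟩

lemma connIn_of_induce {T : SimpleGraph ι} {S : Set ι} (h : (T.induce S).Connected) :
    ConnIn T S := by
  obtain ⟨⟨x0, hx0⟩⟩ := h.nonempty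
  refine ⟨⟨x0, hx0⟩, fun x hx y hy => ?_⟩
  obtain ⟨w⟩ := h.preconnected ⟨x, hx⟩ ⟨y, hy⟩
  refine ⟨w.map (outHom T S), fun z hz => ?_⟩
  erw [Walk.support_map, List.mem_map] at hz
  obtain ⟨⟨z', hz'⟩, -, rfl⟩ := hz
  exact hz'

lemma lift_walk {T : SimpleGraph ι} {U : Set ι} {x y : ι} (hx : x ∈ U) (hy : y ∈ U)
    (w : T.Walk x y) (hw : ∀ z ∈ w.support, z ∈ U) :
    ∃ w' : (T.induce U).Walk ⟨x, hx⟩ ⟨y, hy⟩, ∀ z ∈ w'.support, (z : ι) ∈ w.support := by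
  induction w with
  | nil => exact ⟨Walk.nil, by simp⟩
  | @cons u v w' h p ih =>
      have hv : v ∈ U := hw v (by simp)
      obtain ⟨q, hq⟩ := ih hv hy (fun z hz => hw z (by simp [hz]))
      refine ⟨Walk.cons (by exact h) q, fun z hz => ?_⟩
      erw [Walk.support_cons, List.mem_cons] at hz
      rcases hz with rfl | hz
      · simp
      · simp [hq z hz]

lemma leaf_not_mem_path_support {T : SimpleGraph ι} {ℓ s : ι}
    (hleaf : ∀ u, T.Adj ℓ u → u = s) {x y : ι} (hx : x ≠ ℓ) (hy : y ≠ ℓ)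
    (p : T.Walk x y) (hp : p.IsPath) : ℓ ∉ p.support := by
  intro hmem
  obtain ⟨q, r, rfl⟩ := Walk.mem_support_iff_exists_append.mp hmem
  obtain ⟨u, hu, q', hq'⟩ := Walk.exists_eq_cons_of_ne (Ne.symm hx) q.reverse
  obtain ⟨v, hv, r', hr'⟩ := Walk.exists_eq_cons_of_ne (fun h => hy h.symm) r
  have hus : u = s := hleaf u hu
  have hvs : v = s := hleaf v hv
  have hnd := hp.support_nodup
  rw [Walk.support_append] at hnd
  have hdisj := List.disjoint_of_nodup_append hnd
  have huq : s ∈ q.support := by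
    have : u ∈ q.reverse.support := by rw [hq']; simp
    rwa [Walk.support_reverse, List.mem_reverse, hus] at this
  have hvr : s ∈ r.support.tail := by
    have : v ∈ r.support.tail := by rw [hr']; simp
    rwa [hvs] at this
  exact hdisj huq hvr

lemma step_mem {T : SimpleGraph ι} {W : Set ι} {ℓ s : ι}
    (hleaf : ∀ u, T.Adj ℓ u → u = s)
    (hW : ∀ x ∈ W, ∀ y ∈ W, ∃ w : T.Walk x y, ∀ z ∈ w.support, z ∈ W)
    (hℓ : ℓ ∈ W) {y : ι} (hy : y ∈ W) (hyl : y ≠ ℓ) : s ∈ W := by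
  obtain ⟨w, hw⟩ := hW ℓ hℓ y hy
  obtain ⟨u, hu, w', hw'⟩ := Walk.exists_eq_cons_of_ne (Ne.symm hyl) w
  have : u ∈ w.support := by rw [hw']; simp
  rw [hleaf u hu] at this
  exact hw s this

lemma exists_leaf [Fintype ι] {T : SimpleGraph ι} (hT : T.IsTree)
    (h2 : 2 ≤ Fintype.card ι) : ∃ ℓ s, T.Adj ℓ s ∧ ∀ u, T.Adj ℓ u → u = s := by
  classical
  have hdeg1 : ∀ v : ι, ∃ u, T.Adj v u := by
    intro v
    obtain ⟨u, hu⟩ := Fintype.exists_ne_of_one_lt_card (by omega) v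
    obtain ⟨z, hz, -, -⟩ := Walk.exists_eq_cons_of_ne (Ne.symm hu) ((hT.isConnected.preconnected v u).some)
    exact ⟨z, hz⟩
  by_contra hcon
  push_neg at hcon
  have hdeg2 : ∀ v : ι, 2 ≤ T.degree v := by
    intro v
    obtain ⟨u, hu⟩ := hdeg1 v
    obtain ⟨z, hz, hzu⟩ := hcon v u hu
    have hsub : ({u, z} : Finset ι) ⊆ T.neighborFinset v := by
      intro a ha
      rw [Finset.mem_insert, Finset.mem_singleton] at ha
      rcases ha with rfl | rfl <;> rw [mem_neighborFinset] <;> assumption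
    have : ({u, z} : Finset ι).card = 2 := Finset.card_pair (Ne.symm hzu)
    rw [← this]
    exact Finset.card_le_card hsub
  have hsum := T.sum_degrees_eq_twice_card_edges
  have hcard := hT.card_edgeFinset
  have hge : 2 * Fintype.card ι ≤ ∑ v, T.degree v := by
    calc 2 * Fintype.card ι = ∑ _v : ι, 2 := by simp [mul_comm]
    _ ≤ ∑ v, T.degree v := Finset.sum_le_sum (fun v _ => hdeg2 v)
  omega

lemma isTree_delete_leaf {T : SimpleGraph ι} (hT : T.IsTree) {ℓ s : ι}
    (hadj : T.Adj ℓ s) (hleaf : ∀ u, T.Adj ℓ u → u = s) :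
    (T.induce {t | t ≠ ℓ}).IsTree := by
  obtain ⟨hconn, hacyc⟩ := hT
  constructor
  · rw [connected_iff]
    constructor
    · rintro ⟨x, hx⟩ ⟨y, hy⟩
      obtain ⟨w⟩ := hconn.preconnected x y
      have hℓ : ℓ ∉ (w.toPath : T.Walk x y).support :=
        leaf_not_mem_path_support hleaf hx hy _ w.toPath.2
      obtain ⟨w', -⟩ := lift_walk hx hy (w.toPath : T.Walk x y)
        (fun z hz => fun h => hℓ (h ▸ hz))
      exact ⟨w'⟩
    · exact ⟨⟨s, hadj.ne'⟩⟩
  · intro v c hc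
    exact hacyc _ (hc.map (f := outHom T {t | t ≠ ℓ}) Subtype.val_injective)

lemma connIn_restrict {ι : Type} {T : SimpleGraph ι} {ℓ s : ι}
    (hleaf : ∀ u, T.Adj ℓ u → u = s) {W : Set ι} (hW : ConnIn T W)
    {z : ι} (hz : z ∈ W) (hzl : z ≠ ℓ) :
    ConnIn (T.induce {t | t ≠ ℓ}) {x : {t // t ≠ ℓ} | ↑x ∈ W} := by
  refine ⟨⟨⟨z, hzl⟩, hz⟩, ?_⟩
  rintro ⟨x, hxl⟩ hx ⟨y, hyl⟩ hy
  obtain ⟨w, hw⟩ := hW.2 x hx y hy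
  have hpsub : ∀ z' ∈ (w.toPath : T.Walk x y).support, z' ∈ W :=
    fun z' hz' => hw z' (w.support_toPath_subset hz')
  have hℓ : ℓ ∉ (w.toPath : T.Walk x y).support :=
    leaf_not_mem_path_support hleaf hxl hyl _ w.toPath.2
  obtain ⟨w', hw'⟩ := lift_walk (U := {t | t ≠ ℓ}) hxl hyl (w.toPath : T.Walk x y)
    (fun z' hz' => fun h => hℓ (h ▸ hz'))
  exact ⟨w', fun z' hz' => hpsub ↑z' (hw' z' hz')⟩

lemma key_aux : ∀ (N : ℕ) (ι : Type) (T : SimpleGraph ι) (instF : Fintype ι),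
    Fintype.card ι ≤ N → T.IsTree →
    ∀ {A B : Type} (S : A → Set ι) (R : B → Set ι),
    (∀ a, ConnIn T (S a)) → (∀ b, ConnIn T (R b)) →
    (∀ a b, (S a ∩ R b).Nonempty) →
    ∃ t, (∀ a, t ∈ S a) ∨ (∀ b, t ∈ R b) := by
  intro N
  induction N with
  | zero =>
      intro ι T instF hcard hT A B S R hS hR hSR
      exfalso
      obtain ⟨t⟩ := hT.isConnected.nonempty
      have : 0 < Fintype.card ι := @Fintype.card_pos _ _ ⟨t⟩
      omega
  | succ N IH =>
      intro ι T instF hcard hT A B S R hS hR hSR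
      by_cases hsmall : Fintype.card ι ≤ 1
      · obtain ⟨t⟩ := hT.isConnected.nonempty
        refine ⟨t, Or.inl fun a => ?_⟩
        obtain ⟨x, hx⟩ := (hS a).1
        exact (Fintype.card_le_one_iff).mp hsmall x t ▸ hx
      · push_neg at hsmall
        obtain ⟨ℓ, s, hadj, hleaf⟩ := exists_leaf hT hsmall
        by_cases hAcase : ∃ a, S a ⊆ {ℓ}
        · obtain ⟨a, ha⟩ := hAcase
          refine ⟨ℓ, Or.inr fun b => ?_⟩
          obtain ⟨x, hxS, hxR⟩ := hSR a b
          exact (ha hxS : x = ℓ) ▸ hxR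
        by_cases hBcase : ∃ b, R b ⊆ {ℓ}
        · obtain ⟨b, hb⟩ := hBcase
          refine ⟨ℓ, Or.inl fun a => ?_⟩
          obtain ⟨x, hxS, hxR⟩ := hSR a b
          exact (hb hxR : x = ℓ) ▸ hxS
        push_neg at hAcase hBcase
        have hmemS : ∀ a, ∃ x, x ∈ S a ∧ x ≠ ℓ := by
          intro a
          obtain ⟨x, hx, hne⟩ := Set.not_subset.mp (hAcase a)
          exact ⟨x, hx, hne⟩
        have hmemR : ∀ b, ∃ x, x ∈ R b ∧ x ≠ ℓ := by
          intro b
          obtain ⟨x, hx, hne⟩ := Set.not_subset.mp (hBcase b)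
          exact ⟨x, hx, hne⟩
        have hT' : (T.induce {t | t ≠ ℓ}).IsTree := isTree_delete_leaf hT hadj hleaf
        have hcard' : Fintype.card {t : ι // t ≠ ℓ} ≤ N := by
          have h0 := Fintype.card_subtype_lt (p := fun t => t ≠ ℓ) (x := ℓ) (by simp)
          have h2 : Fintype.card {t : ι // t ≠ ℓ} < Fintype.card ι := h0
          omega
        have hcross' : ∀ a b,
            ({x : {t : ι // t ≠ ℓ} | ↑x ∈ S a} ∩ {x | ↑x ∈ R b}).Nonempty := by
          intro a b
          obtain ⟨x, hxS, hxR⟩ := hSR a b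
          by_cases hxl : x = ℓ
          · subst hxl
            obtain ⟨yS, hyS, hySl⟩ := hmemS a
            obtain ⟨yR, hyR, hyRl⟩ := hmemR b
            have h1 : s ∈ S a := step_mem hleaf (hS a).2 hxS hyS hySl
            have h2 : s ∈ R b := step_mem hleaf (hR b).2 hxR hyR hyRl
            exact ⟨⟨s, hadj.ne'⟩, h1, h2⟩
          · exact ⟨⟨x, hxl⟩, hxS, hxR⟩
        obtain ⟨t, ht⟩ := IH {t : ι // t ≠ ℓ} (T.induce {t | t ≠ ℓ}) inferInstance hcard' hT'
          (fun a => {x | ↑x ∈ S a}) (fun b => {x | ↑x ∈ R b})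
          (fun a => by
            obtain ⟨x, hx, hxl⟩ := hmemS a
            exact connIn_restrict hleaf (hS a) hx hxl)
          (fun b => by
            obtain ⟨x, hx, hxl⟩ := hmemR b
            exact connIn_restrict hleaf (hR b) hx hxl)
          hcross'
        exact ⟨↑t, ht.imp (fun h a => h a) (fun h b => h b)⟩

end AuxiliaryLemmas

section MoreAux

lemma sum_coverCount {V : Type*} [Fintype V] (𝒞 : Multiset (Set V)) :
    ∑ v : V, coverCount 𝒞 v
      = (𝒞.map (fun C => (Finset.univ.filter (fun v => v ∈ C)).card)).sum := by
  classical
  induction 𝒞 using Multiset.induction_on with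
  | empty => simp [coverCount]
  | cons C s ih =>
      have hcnt : ∀ v : V, coverCount (C ::ₘ s) v
          = coverCount s v + (if v ∈ C then 1 else 0) := by
        intro v
        simp [coverCount, Multiset.countP_cons]
      rw [Multiset.map_cons, Multiset.sum_cons]
      calc ∑ v : V, coverCount (C ::ₘ s) v
          = ∑ v : V, (coverCount s v + (if v ∈ C then 1 else 0)) := by
            exact Finset.sum_congr rfl (fun v _ => hcnt v)
        _ = (∑ v : V, coverCount s v) + ∑ v : V, (if v ∈ C then 1 else 0) :=
            Finset.sum_add_distrib
        _ = (Finset.univ.filter (fun v => v ∈ C)).card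
              + (s.map (fun C => (Finset.univ.filter (fun v => v ∈ C)).card)).sum := by
            rw [ih, Finset.card_filter]
            ring

lemma exists_big_elem {n m r : ℕ} (hr : 2 < r) (hm : (m:ℝ) < n * (1 - 2/(r:ℝ))) (hn0 : 0 < n)
    (𝒞 : Multiset (Set (Fin n ⊕ Fin n))) (hne : 𝒞 ≠ 0)
    (hcov : ∀ v, (1 - 1/(r:ℝ)) * (Multiset.card 𝒞 : ℝ) ≤ (coverCount 𝒞 v : ℝ)) :
    ∃ C ∈ 𝒞, n + m ≤ (Finset.univ.filter (fun v => v ∈ C)).card := by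
  classical
  by_contra hcon
  push_neg at hcon
  have hub : (𝒞.map (fun C => (Finset.univ.filter (fun v => v ∈ C)).card)).sum
      ≤ (n + m - 1) * Multiset.card 𝒞 := by
    have := Multiset.sum_le_card_nsmul
      (𝒞.map (fun C => (Finset.univ.filter (fun v => v ∈ C)).card)) (n + m - 1)
      (by
        intro x hx
        obtain ⟨C, hC, rfl⟩ := Multiset.mem_map.mp hx
        have := hcon C hC
        omega)
    simpa [Multiset.card_map, smul_eq_mul, mul_comm] using this
  have hlb : ((n : ℝ) + n) * ((1 - 1/(r:ℝ)) * (Multiset.card 𝒞 : ℝ))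
      ≤ ((∑ v : Fin n ⊕ Fin n, coverCount 𝒞 v : ℕ) : ℝ) := by
    push_cast
    have := Finset.card_nsmul_le_sum Finset.univ
      (fun v : Fin n ⊕ Fin n => (coverCount 𝒞 v : ℝ))
      ((1 - 1/(r:ℝ)) * (Multiset.card 𝒞 : ℝ)) (fun v _ => hcov v)
    simpa [Finset.card_univ, nsmul_eq_mul, add_mul] using this
  rw [sum_coverCount] at hlb
  have hK : (0:ℝ) < (Multiset.card 𝒞 : ℝ) := by
    have := Multiset.card_pos.mpr hne
    exact_mod_cast this
  have hub' : ((𝒞.map (fun C => (Finset.univ.filter (fun v => v ∈ C)).card)).sum : ℝ)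
      ≤ ((n:ℝ) + m - 1) * (Multiset.card 𝒞 : ℝ) := by
    have h1 : (1:ℕ) ≤ n + m := by omega
    calc ((𝒞.map (fun C => (Finset.univ.filter (fun v => v ∈ C)).card)).sum : ℝ)
        ≤ (((n + m - 1) * Multiset.card 𝒞 : ℕ) : ℝ) := by exact_mod_cast hub
      _ = ((n:ℝ) + m - 1) * (Multiset.card 𝒞 : ℝ) := by
          push_cast [Nat.cast_sub h1]
          ring
  have hmain : ((n : ℝ) + n) * (1 - 1/(r:ℝ)) ≤ (n:ℝ) + m - 1 := by
    have h := le_trans hlb hub'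
    rw [← mul_assoc] at h
    exact le_of_mul_le_mul_right h hK
  have hr0 : (0:ℝ) < r := by
    have : (0:ℕ) < r := by omega
    exact_mod_cast this
  have hrexp : ((n : ℝ) + n) * (1 - 1/(r:ℝ)) = (n:ℝ) + n * (1 - 2/(r:ℝ)) := by
    field_simp
    ring
  rw [hrexp] at hmain
  linarith

lemma filter_sum_card {n : ℕ} (C : Set (Fin n ⊕ Fin n)) :
    (Finset.univ.filter (fun v => v ∈ C)).card
      = (Finset.univ.filter (fun i : Fin n => Sum.inl i ∈ C)).card
        + (Finset.univ.filter (fun j : Fin n => Sum.inr j ∈ C)).card := by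
  classical
  rw [← Fintype.card_subtype, ← Fintype.card_subtype, ← Fintype.card_subtype]
  rw [Fintype.card_congr (Equiv.subtypeSum (p := fun v => v ∈ C))]
  simp [Fintype.card_sum]

lemma unit_tree : (⊥ : SimpleGraph Unit).IsTree := by
  constructor
  · rw [SimpleGraph.connected_iff]
    exact ⟨fun u v => by rw [Subsingleton.elim u v], ⟨()⟩⟩
  · exact SimpleGraph.isAcyclic_bot

lemma treeAlphaLE_card {W : Type*} [Fintype W] (G : SimpleGraph W) :
    treeAlphaLE G (Fintype.card W) := by
  refine ⟨⟨Unit, inferInstance, ⊥, unit_tree, fun _ => Set.univ,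
    fun v => ⟨(), trivial⟩, fun u v _ => ⟨(), trivial, trivial⟩, fun v => ?_⟩, ?_⟩
  · rw [SimpleGraph.connected_iff]
    refine ⟨fun a b => by rw [Subsingleton.elim a b], ⟨⟨(), trivial⟩⟩⟩
  · intro t I hI
    simpa using Finset.card_le_univ I

end MoreAux

/-- For `r > 2` and `n > m/(1 - 2/r)`, every `(1 - 1/r)`-general cover of
`K_{n,n}` has an element whose induced subgraph contains `K_{m,m}` as an induced subgraph, and
hence has tree-independence number at least `m`. -/
theorem stmt7 (r : ℕ) (hr : 2 < r) (m n : ℕ)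
    (hn : (m : ℝ) / (1 - 2 / (r : ℝ)) < (n : ℝ))
    (𝒞 : Multiset (Set (Fin n ⊕ Fin n)))
    (h𝒞 : IsGeneralCover (1 - 1 / (r : ℝ)) 𝒞) :
    ∃ C ∈ 𝒞,
      Nonempty ((completeBipartiteGraph (Fin m) (Fin m)) ↪g
          ((completeBipartiteGraph (Fin n) (Fin n)).induce C)) ∧
      m ≤ treeAlpha ((completeBipartiteGraph (Fin n) (Fin n)).induce C) := by
  classical
  obtain ⟨hne, hcov⟩ := h𝒞
  have hr0 : (0:ℝ) < r := by
    have : (0:ℕ) < r := by omega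
    exact_mod_cast this
  have hfrac : (0:ℝ) < 1 - 2 / r := by
    rw [sub_pos, div_lt_one hr0]
    exact_mod_cast hr
  have hm : (m:ℝ) < n * (1 - 2/(r:ℝ)) := by
    rw [div_lt_iff₀ hfrac] at hn
    linarith
  have hn0 : 0 < n := by
    have h0 : (0:ℝ) ≤ (m:ℝ) / (1 - 2/(r:ℝ)) := div_nonneg (by positivity) (le_of_lt hfrac)
    have : (0:ℝ) < n := lt_of_le_of_lt h0 hn
    exact_mod_cast this
  obtain ⟨C, hC𝒞, hCbig⟩ := exists_big_elem hr hm hn0 𝒞 hne hcov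
  have hsplit := filter_sum_card C
  have hLle : (Finset.univ.filter (fun i : Fin n => Sum.inl i ∈ C)).card ≤ n :=
    le_trans (Finset.card_filter_le _ _) (by simp)
  have hRle : (Finset.univ.filter (fun j : Fin n => Sum.inr j ∈ C)).card ≤ n :=
    le_trans (Finset.card_filter_le _ _) (by simp)
  have hLge : m ≤ (Finset.univ.filter (fun i : Fin n => Sum.inl i ∈ C)).card := by omega
  have hRge : m ≤ (Finset.univ.filter (fun j : Fin n => Sum.inr j ∈ C)).card := by omega
  obtain ⟨L, hLsub, hLcard⟩ := Finset.exists_subset_card_eq hLge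
  obtain ⟨R, hRsub, hRcard⟩ := Finset.exists_subset_card_eq hRge
  have hf1inj : Function.Injective (fun i : Fin m => (↑(L.orderIsoOfFin hLcard i) : Fin n)) :=
    fun i j h => (L.orderIsoOfFin hLcard).injective (Subtype.ext h)
  have hf2inj : Function.Injective (fun j : Fin m => (↑(R.orderIsoOfFin hRcard j) : Fin n)) :=
    fun i j h => (R.orderIsoOfFin hRcard).injective (Subtype.ext h)
  have hf1C : ∀ i, Sum.inl (↑(L.orderIsoOfFin hLcard i) : Fin n) ∈ C := by
    intro i
    have h1 := hLsub (L.orderIsoOfFin hLcard i).2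
    exact (Finset.mem_filter.mp h1).2
  have hf2C : ∀ j, Sum.inr (↑(R.orderIsoOfFin hRcard j) : Fin n) ∈ C := by
    intro j
    have h1 := hRsub (R.orderIsoOfFin hRcard j).2
    exact (Finset.mem_filter.mp h1).2
  set φ : Fin m ⊕ Fin m → ↥C :=
    Sum.elim (fun i => ⟨Sum.inl (↑(L.orderIsoOfFin hLcard i) : Fin n), hf1C i⟩)
      (fun j => ⟨Sum.inr (↑(R.orderIsoOfFin hRcard j) : Fin n), hf2C j⟩) with hφ
  have hφinj : Function.Injective φ := by
    rintro (i | i) (j | j) h <;>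
      simp only [hφ, Sum.elim_inl, Sum.elim_inr, Subtype.mk.injEq, Sum.inl.injEq,
        Sum.inr.injEq, reduceCtorEq] at h
    · exact congrArg Sum.inl (hf1inj h)
    · exact congrArg Sum.inr (hf2inj h)
  have hadjφ : ∀ i j : Fin m,
      ((completeBipartiteGraph (Fin n) (Fin n)).induce C).Adj (φ (Sum.inl i)) (φ (Sum.inr j)) := by
    intro i j
    show (completeBipartiteGraph (Fin n) (Fin n)).Adj
      (Sum.inl (↑(L.orderIsoOfFin hLcard i) : Fin n)) (Sum.inr (↑(R.orderIsoOfFin hRcard j) : Fin n))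
    simp [completeBipartiteGraph]
  have hnonadj1 : ∀ i j : Fin m,
      ¬ ((completeBipartiteGraph (Fin n) (Fin n)).induce C).Adj (φ (Sum.inl i)) (φ (Sum.inl j)) := by
    intro i j h
    have : (completeBipartiteGraph (Fin n) (Fin n)).Adj
      (Sum.inl (↑(L.orderIsoOfFin hLcard i) : Fin n)) (Sum.inl (↑(L.orderIsoOfFin hLcard j) : Fin n)) := h
    simp [completeBipartiteGraph] at this
  have hnonadj2 : ∀ i j : Fin m,
      ¬ ((completeBipartiteGraph (Fin n) (Fin n)).induce C).Adj (φ (Sum.inr i)) (φ (Sum.inr j)) := by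
    intro i j h
    have : (completeBipartiteGraph (Fin n) (Fin n)).Adj
      (Sum.inr (↑(R.orderIsoOfFin hRcard i) : Fin n)) (Sum.inr (↑(R.orderIsoOfFin hRcard j) : Fin n)) := h
    simp [completeBipartiteGraph] at this
  refine ⟨C, hC𝒞, ⟨⟨⟨φ, hφinj⟩, ?_⟩⟩, ?_⟩
  · rintro (i | i) (j | j) <;>
      constructor <;> intro h
    · exact absurd h (hnonadj1 i j)
    · simp [completeBipartiteGraph] at h
    · exact Or.inl ⟨rfl, rfl⟩
    · exact hadjφ i j
    · exact Or.inr ⟨rfl, rfl⟩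
    · have := hadjφ j i
      exact ((completeBipartiteGraph (Fin n) (Fin n)).induce C).adj_symm this
    · exact absurd h (hnonadj2 i j)
    · simp [completeBipartiteGraph] at h
  · refine le_csInf ⟨Fintype.card ↥C, treeAlphaLE_card _⟩ ?_
    rintro k ⟨td, hIndep⟩
    obtain ⟨t, ht⟩ := key_aux (@Fintype.card td.ι td.fin) td.ι td.T td.fin le_rfl td.isTree
      (fun i : Fin m => {t | φ (Sum.inl i) ∈ td.bag t})
      (fun j : Fin m => {t | φ (Sum.inr j) ∈ td.bag t})
      (fun i => connIn_of_induce (td.bag_connected _))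
      (fun j => connIn_of_induce (td.bag_connected _))
      (fun i j => by
        obtain ⟨t, h1, h2⟩ := td.edge_bag (hadjφ i j)
        exact ⟨t, h1, h2⟩)
    rcases ht with h | h
    · set I : Finset ↥C := Finset.univ.map
        ⟨fun i : Fin m => φ (Sum.inl i), fun i j hij => Sum.inl.inj (hφinj hij)⟩ with hI
      have hcard : I.card = m := by simp [hI]
      have hind : IsIndepSetIn ((completeBipartiteGraph (Fin n) (Fin n)).induce C) (td.bag t) I := by
        constructor
        · intro x hx
          obtain ⟨i, -, rfl⟩ := Finset.mem_map.mp hx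
          exact h i
        · intro u hu v hv hne hadj
          obtain ⟨i, -, rfl⟩ := Finset.mem_map.mp hu
          obtain ⟨j, -, rfl⟩ := Finset.mem_map.mp hv
          exact hnonadj1 i j hadj
      have := hIndep t I hind
      omega
    · set I : Finset ↥C := Finset.univ.map
        ⟨fun j : Fin m => φ (Sum.inr j), fun i j hij => Sum.inr.inj (hφinj hij)⟩ with hI
      have hcard : I.card = m := by simp [hI]
      have hind : IsIndepSetIn ((completeBipartiteGraph (Fin n) (Fin n)).induce C) (td.bag t) I := by
        constructor
        · intro x hx
          obtain ⟨j, -, rfl⟩ := Finset.mem_map.mp hx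
          exact h j
        · intro u hu v hv hne hadj
          obtain ⟨i, -, rfl⟩ := Finset.mem_map.mp hu
          obtain ⟨j, -, rfl⟩ := Finset.mem_map.mp hv
          exact hnonadj2 i j hadj
      have := hIndep t I hind
      omega
end
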